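/- arXiv:2102.10088 — 4 statements merged into one kernel-verified Lean document; each statement's English description precedes it below -/
import Mathlib

section
/- Let (I_k)_{k=0}^∞ be a branch of dyadic intervals (I_0 = ∅, I_1 = [0,1), and each I_{k+1} is a half of I_k) with associated signs (θ_k), and let (a_k)_{k=0}^n be scalars. Then the L_1-norm of Σ_{k=0}^n a_k θ_k |I_k|^{-1} h_{I_k} is at most Σ_{k=1}^n |a_k - a_{k-1}| + |a_n|. -/
open MeasureTheory Filter Set
open scoped ENNReal

noncomputable section
open Classical

/-- The dyadic interval of level `n` and position `i`. -/
def dyI (n i : ℕ) : Set ℝ := Set.Ico ((i : ℝ) / 2 ^ n) ((i + 1 : ℝ) / 2 ^ n)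

/-- The Haar function of the dyadic interval of level `n`, position `i`. -/
def haarFn (n i : ℕ) : ℝ → ℝ := fun x =>
  if x ∈ dyI (n + 1) (2 * i) then 1 else if x ∈ dyI (n + 1) (2 * i + 1) then -1 else 0

/-- Indexing of `D⁺`: `none` is the "empty" index `∅`, `some (n, i)` a dyadic interval. -/
def haarP : Option (ℕ × ℕ) → ℝ → ℝ
  | none => (Set.Ico (0 : ℝ) 1).indicator 1
  | some (n, i) => haarFn n i

/-- The interval supporting a given index of `D⁺` (with the convention that `∅` is
supported on `[0,1)`). -/
def suppI : Option (ℕ × ℕ) → Set ℝ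
  | none => Set.Ico (0 : ℝ) 1
  | some p => dyI p.1 p.2

def lenI : Option (ℕ × ℕ) → ℝ
  | none => 1
  | some (n, _i) => 1 / 2 ^ n

def validIdx : Option (ℕ × ℕ) → Prop
  | none => True
  | some (n, i) => i < 2 ^ n

/-- The position of the `k`-th member of a branch determined by signs `θ`
(`θ k = true` means the branch turns to the left half at step `k`). -/
def branchPos (θ : ℕ → Bool) : ℕ → ℕ
  | 0 => 0
  | 1 => 0
  | k + 2 => 2 * branchPos θ (k + 1) + (if θ (k + 1) then 0 else 1)

/-- The `k`-th member `I_k` of the branch determined by `θ`, as an index in `D⁺`. -/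
def branchI (θ : ℕ → Bool) (k : ℕ) : Option (ℕ × ℕ) :=
  if k = 0 then none else some (k - 1, branchPos θ k)

/-- The sign `θ_k`, with the convention `θ_0 = 1`. -/
def branchSgn (θ : ℕ → Bool) (k : ℕ) : ℝ :=
  if k = 0 then 1 else if θ k then 1 else -1

/-- The weight `|I_k|⁻¹`, with the convention `|I_0|⁻¹ = |∅|⁻¹ = 1`. -/
def branchWt (k : ℕ) : ℝ := if k = 0 then 1 else 2 ^ (k - 1)

/-- `B_k = I_k \ I_{k+1}`. -/
def branchB (θ : ℕ → Bool) (k : ℕ) : Set ℝ := suppI (branchI θ k) \ suppI (branchI θ (k + 1))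


/-- Lebesgue measure restricted to `[0,1)`. -/
def mu01 : Measure ℝ := volume.restrict (Set.Ico 0 1)

lemma mu01_ne_top (s : Set ℝ) : mu01 s ≠ ⊤ := by
  refine ne_top_of_le_ne_top ?_ (measure_mono (Set.subset_univ s))
  have : mu01 Set.univ = volume (Set.Ico (0:ℝ) 1) := by
    simp [mu01]
  rw [this, Real.volume_Ico]
  exact ENNReal.ofReal_ne_top

/-- indicator of a measurable set, as an element of `L₁[0,1)`. -/
def indL1 (s : Set ℝ) (hs : MeasurableSet s) : Lp ℝ 1 mu01 :=
  indicatorConstLp 1 hs (mu01_ne_top s) (1 : ℝ)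

/-- The Haar system as elements of `L₁[0,1)`, indexed by `D⁺`. -/
def haarL1 : Option (ℕ × ℕ) → Lp ℝ 1 mu01
  | none => indL1 (Set.Ico (0 : ℝ) 1) measurableSet_Ico
  | some (n, i) => indL1 (dyI (n + 1) (2 * i)) measurableSet_Ico
      - indL1 (dyI (n + 1) (2 * i + 1)) measurableSet_Ico

section Tensor

variable {X : Type*} [NormedAddCommGroup X] [NormedSpace ℝ X]

/-- the elementary tensor `f ⊗ x` as an element of the Bochner space `L₁([0,1); X)`. -/
def tensorL1 (f : Lp ℝ 1 mu01) (x : X) : Lp X 1 mu01 :=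
  ((L1.integrable_coeFn f).smul_const x).toL1 _

/-- For an operator `T` on `L₁(X)`, a functional `g ∈ X*` and a vector `x ∈ X`, the operator
`T^{(g,x)} : L₁ → L₁` defined by `⟨e*, T^{(g,x)} e⟩ = ⟨e* ⊗ g, T (e ⊗ x)⟩`; concretely
`T^{(g,x)} e = (s ↦ g ((T (e ⊗ x)) s))`. -/
def entryFun (T : Lp X 1 mu01 →L[ℝ] Lp X 1 mu01) (g : X →L[ℝ] ℝ) (x : X)
    (f : Lp ℝ 1 mu01) : Lp ℝ 1 mu01 :=
  (g.integrable_comp (L1.integrable_coeFn (T (tensorL1 f x)))).toL1 _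

end Tensor

/-- the linear span `Z` of the indicators of dyadic intervals. -/
def dyadicSpan : Submodule ℝ (ℝ → ℝ) :=
  Submodule.span ℝ {f | ∃ n i, i < 2 ^ n ∧ f = (dyI n i).indicator 1}

/-- A Haar system space norm: a norm on the span `Z` of the dyadic indicators which is
invariant under equidistribution and gives `χ_{[0,1)}` norm one.  The corresponding Haar
system space is the completion of `Z` under this norm. -/
structure HaarSystemNorm where
  N : (ℝ → ℝ) → ℝ
  nonneg : ∀ f, 0 ≤ N f
  add_le : ∀ f g, f ∈ dyadicSpan → g ∈ dyadicSpan → N (f + g) ≤ N f + N g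
  smul_eq : ∀ (c : ℝ) f, f ∈ dyadicSpan → N (c • f) = |c| * N f
  eq_zero : ∀ f, f ∈ dyadicSpan → N f = 0 → f = 0
  distrib_inv : ∀ f g, f ∈ dyadicSpan → g ∈ dyadicSpan →
    (∀ t : ℝ, volume {x | t < |f x|} = volume {x | t < |g x|}) → N f = N g
  norm_one : N ((Set.Ico (0 : ℝ) 1).indicator 1) = 1

/-- A realization of the Haar system space determined by a Haar system norm:
a Banach space `X` together with a linear embedding `j` of the span of the dyadic
indicators, which is isometric on the span and has dense range. -/
structure HaarSystemSpace (X : Type*) [NormedAddCommGroup X] [NormedSpace ℝ X] where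
  hn : HaarSystemNorm
  j : (ℝ → ℝ) →ₗ[ℝ] X
  norm_j : ∀ f ∈ dyadicSpan, ‖j f‖ = hn.N f
  dense_j : DenseRange (fun f : dyadicSpan => j f)

/-- the `X`-normalized Haar system `μ_L h_L` in a Haar system space. -/
def HaarSystemSpace.e {X : Type*} [NormedAddCommGroup X] [NormedSpace ℝ X]
    (H : HaarSystemSpace X) (L : Option (ℕ × ℕ)) : X :=
  ‖H.j ((suppI L).indicator 1)‖⁻¹ • H.j (haarP L)

section Factors

variable {X : Type*} [NormedAddCommGroup X] [NormedSpace ℝ X]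

/-- `T` is a `C`-factor of `S` with error `ε`. -/
def IsFactor (C ε : ℝ) (T S : X →L[ℝ] X) : Prop :=
  ∃ A B : X →L[ℝ] X, ‖B.comp (T.comp A) - S‖ ≤ ε ∧ ‖A‖ * ‖B‖ ≤ C

/-- `T` is a `C`-projectional factor of `S` with error `ε`: here `A : X → Y ⊆ X` is the
isomorphism onto a complemented subspace and `B = A⁻¹P` where `P` is the projection,
so that `B ∘ A = Id`. -/
def IsProjFactor (C ε : ℝ) (T S : X →L[ℝ] X) : Prop :=
  ∃ A B : X →L[ℝ] X, B.comp A = ContinuousLinearMap.id ℝ X ∧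
    ‖B.comp (T.comp A) - S‖ ≤ ε ∧ ‖A‖ * ‖B‖ ≤ C

end Factors

/-- the `n`-th Rademacher function `r_n = ∑_{L ∈ D_n} h_L`. -/
def rademacherFn (n : ℕ) : ℝ → ℝ := fun x => ∑ i ∈ Finset.range (2 ^ n), haarFn n i x

/-- Enumeration of the Haar system in the usual linear order `ι`
(`haarEnum 1 = h_∅`, `haarEnum 2 = h_{[0,1)}`, then level by level). -/
def haarEnum : ℕ → ℝ → ℝ := fun m =>
  if m ≤ 1 then (Set.Ico (0 : ℝ) 1).indicator 1
  else haarFn (Nat.log 2 (m - 1)) (m - 2 ^ Nat.log 2 (m - 1) - 1)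

/-- extraction of binary digits: `digitsFn x k` records whether the `k`-th digit of `x`
is `0`, i.e. whether the branch through `x` turns left at step `k`. -/
def digitsFn (x : ℝ) : ℕ → Bool := fun k => decide (⌊x * 2 ^ k⌋ % 2 = 0)

/-- the coin-tossing measure on the space of branches `[D⁺] ≃ {-1,1}^ℕ`, realized as the
image of Lebesgue measure on `[0,1)` under the binary-digit identification. -/
def muBr : Measure (ℕ → Bool) := Measure.map digitsFn mu01

/-- `h_Γ^θ = ∑_{J ∈ Γ} θ_J h_J` for a finite collection `Γ` of dyadic intervals. -/
def hGamma (Γ : Finset (ℕ × ℕ)) (θ : ℕ × ℕ → Bool) : ℝ → ℝ :=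
  fun x => ∑ J ∈ Γ, (if θ J then (1:ℝ) else -1) * haarFn J.1 J.2 x

/-- `Γ* = ∪ {I : I ∈ Γ}`. -/
def GammaStar (Γ : Finset (ℕ × ℕ)) : Set ℝ := ⋃ J ∈ Γ, dyI J.1 J.2

/-- `|Γ*|`, the total length of a disjoint finite collection of dyadic intervals. -/
def lenGamma (Γ : Finset (ℕ × ℕ)) : ℝ := ∑ J ∈ Γ, (1 : ℝ) / 2 ^ J.1



lemma dyI_union (n i : ℕ) : dyI (n+1) (2*i) ∪ dyI (n+1) (2*i+1) = dyI n i := by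
  unfold dyI
  push_cast
  have h1 : (2*(i:ℝ))/2^(n+1) = i/2^n := by field_simp; ring
  have h2 : (2*(i:ℝ)+1+1)/2^(n+1) = ((i:ℝ)+1)/2^n := by field_simp; ring
  rw [h1, h2]
  refine Set.Ico_union_Ico_eq_Ico ?_ ?_
  · rw [← h1]; gcongr
    linarith
  · rw [← h2]; gcongr
    linarith

lemma dyI_disj (n i : ℕ) : Disjoint (dyI (n+1) (2*i)) (dyI (n+1) (2*i+1)) := by
  unfold dyI
  push_cast
  exact Set.Ico_disjoint_Ico_same

lemma haarFn_left {n i : ℕ} {x : ℝ} (h : x ∈ dyI (n+1) (2*i)) : haarFn n i x = 1 :=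
  if_pos h

lemma haarFn_right {n i : ℕ} {x : ℝ} (h : x ∈ dyI (n+1) (2*i+1)) : haarFn n i x = -1 := by
  rw [haarFn, if_neg (fun hl => (dyI_disj n i).le_bot ⟨hl, h⟩), if_pos h]

lemma haarFn_out {n i : ℕ} {x : ℝ} (h : x ∉ dyI n i) : haarFn n i x = 0 := by
  rw [← dyI_union n i] at h
  rw [haarFn, if_neg (fun hl => h (Set.mem_union_left _ hl)),
    if_neg (fun hr => h (Set.mem_union_right _ hr))]

lemma key1 (θ : ℕ → Bool) (j : ℕ) (x : ℝ) :
    ∑ k ∈ Finset.range (j+1), branchSgn θ k * branchWt k * haarP (branchI θ k) x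
      = (dyI j (branchPos θ (j+1))).indicator (fun _ => (2:ℝ)^j) x := by
  induction j with
  | zero =>
    have : dyI 0 (branchPos θ 1) = Set.Ico (0:ℝ) 1 := by
      simp [dyI, branchPos]
    rw [Finset.sum_range_one, this]
    simp only [branchSgn, branchWt, branchI, haarP, if_pos rfl]
    simp [Set.indicator]
  | succ j ih =>
    rw [Finset.sum_range_succ, ih]
    have hbI : branchI θ (j+1) = some (j, branchPos θ (j+1)) := by simp [branchI]
    set p := branchPos θ (j+1) with hp
    have hsgn : branchSgn θ (j+1) = if θ (j+1) then (1:ℝ) else -1 := by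
      simp [branchSgn]
    have hwt : branchWt (j+1) = (2:ℝ)^j := by simp [branchWt]
    have hq : branchPos θ (j+2) = 2*p + (if θ (j+1) then 0 else 1) := rfl
    rw [hbI, hsgn, hwt, hq]
    show (dyI j p).indicator (fun _ => (2:ℝ)^j) x +
        (if θ (j+1) then (1:ℝ) else -1) * 2^j * haarFn j p x
      = (dyI (j+1) (2*p + (if θ (j+1) then 0 else 1))).indicator (fun _ => (2:ℝ)^(j+1)) x
    by_cases hθ : θ (j+1)
    case pos =>
      simp only [if_pos hθ, Nat.add_zero]
      by_cases hL : x ∈ dyI (j+1) (2*p)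
      · rw [haarFn_left hL, Set.indicator_of_mem hL,
          Set.indicator_of_mem ((dyI_union j p).symm ▸ Or.inl hL : x ∈ dyI j p)]
        ring
      · rw [Set.indicator_of_notMem hL]
        by_cases hR : x ∈ dyI (j+1) (2*p+1)
        · rw [haarFn_right hR,
            Set.indicator_of_mem ((dyI_union j p).symm ▸ Or.inr hR : x ∈ dyI j p)]
          ring
        · have hout : x ∉ dyI j p := by
            rw [← dyI_union j p]; exact fun h => h.elim hL hR
          rw [haarFn_out hout, Set.indicator_of_notMem hout]
          ring
    case neg =>
      simp only [if_neg hθ]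
      by_cases hR : x ∈ dyI (j+1) (2*p+1)
      · rw [haarFn_right hR, Set.indicator_of_mem hR,
          Set.indicator_of_mem ((dyI_union j p).symm ▸ Or.inr hR : x ∈ dyI j p)]
        ring
      · rw [Set.indicator_of_notMem hR]
        by_cases hL : x ∈ dyI (j+1) (2*p)
        · rw [haarFn_left hL,
            Set.indicator_of_mem ((dyI_union j p).symm ▸ Or.inl hL : x ∈ dyI j p)]
          ring
        · have hout : x ∉ dyI j p := by
            rw [← dyI_union j p]; exact fun h => h.elim hL hR
          rw [haarFn_out hout, Set.indicator_of_notMem hout]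
          ring

lemma abel (θ : ℕ → Bool) (a : ℕ → ℝ) (n : ℕ) (x : ℝ) :
    ∑ k ∈ Finset.range (n+1), a k * branchSgn θ k * branchWt k * haarP (branchI θ k) x
      = ∑ j ∈ Finset.range n,
          (a j - a (j+1)) * (dyI j (branchPos θ (j+1))).indicator (fun _ => (2:ℝ)^j) x
        + a n * (dyI n (branchPos θ (n+1))).indicator (fun _ => (2:ℝ)^n) x := by
  induction n with
  | zero =>
    have h := key1 θ 0 x
    rw [Finset.sum_range_one] at h ⊢
    rw [Finset.sum_range_zero]
    linear_combination a 0 * h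
  | succ n ih =>
    have h2 := key1 θ (n+1) x
    rw [Finset.sum_range_succ, key1 θ n x] at h2
    rw [Finset.sum_range_succ, ih, Finset.sum_range_succ]
    linear_combination a (n+1) * h2

lemma measurableSet_dyI (n i : ℕ) : MeasurableSet (dyI n i) := by
  rw [dyI]; exact measurableSet_Ico

lemma sum_Icc_abs (a : ℕ → ℝ) (n : ℕ) :
    ∑ k ∈ Finset.Icc 1 n, |a k - a (k-1)| = ∑ j ∈ Finset.range n, |a j - a (j+1)| := by
  rw [← Finset.Ico_add_one_right_eq_Icc, Finset.sum_Ico_eq_sum_range]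
  simp only [Nat.add_sub_cancel, Nat.add_sub_cancel_left]
  exact Finset.sum_congr rfl fun j hj => by rw [abs_sub_comm, Nat.add_comm 1 j]

lemma volume_dyI (n i : ℕ) : volume (dyI n i) = ENNReal.ofReal (1/2^n) := by
  rw [dyI, Real.volume_Ico]
  congr 1
  ring

lemma integrable_G (c : ℝ) (j i : ℕ) :
    Integrable (fun x => c * (dyI j i).indicator (fun _ => (2:ℝ)^j) x) := by
  refine Integrable.const_mul ?_ c
  rw [integrable_indicator_iff (measurableSet_dyI j i)]
  refine (integrableOn_const_iff).mpr (Or.inr ?_)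
  rw [volume_dyI]
  exact ENNReal.ofReal_lt_top

lemma integral_absG (c : ℝ) (j i : ℕ) :
    ∫ x, |c * (dyI j i).indicator (fun _ => (2:ℝ)^j) x| = |c| := by
  have heq : (fun x => |c * (dyI j i).indicator (fun _ => (2:ℝ)^j) x|)
      = (dyI j i).indicator (fun _ => |c| * 2^j) := by
    funext x
    by_cases hx : x ∈ dyI j i
    · simp [Set.indicator_of_mem hx, abs_mul, abs_of_pos (by positivity : (0:ℝ) < 2^j)]
    · simp [Set.indicator_of_notMem hx]
  rw [heq, integral_indicator (measurableSet_dyI j i), setIntegral_const, measureReal_def, volume_dyI,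
    ENNReal.toReal_ofReal (by positivity), smul_eq_mul]
  field_simp

lemma integral_abs_sum_le {ι : Type*} (s : Finset ι) (F : ι → ℝ → ℝ)
    (hF : ∀ i ∈ s, Integrable (F i)) :
    (∫ x, |∑ i ∈ s, F i x|) ≤ ∑ i ∈ s, ∫ x, |F i x| := by
  calc (∫ x, |∑ i ∈ s, F i x|) ≤ ∫ x, ∑ i ∈ s, |F i x| := by
        refine integral_mono (integrable_finset_sum s hF).abs
          (integrable_finset_sum s fun i hi => (hF i hi).abs) ?_
        exact fun x => Finset.abs_sum_le_sum_abs _ _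
    _ = ∑ i ∈ s, ∫ x, |F i x| := integral_finset_sum s fun i hi => (hF i hi).abs


theorem statement1 (θ : ℕ → Bool) (a : ℕ → ℝ) (n : ℕ) :
    (∫ x, |∑ k ∈ Finset.range (n + 1),
        a k * branchSgn θ k * branchWt k * haarP (branchI θ k) x|) ≤
      (∑ k ∈ Finset.Icc 1 n, |a k - a (k - 1)|) + |a n| := by
  set F : ℕ → ℝ → ℝ := fun j x => (if j = n then a n else a j - a (j+1)) *
    (dyI j (branchPos θ (j+1))).indicator (fun _ => (2:ℝ)^j) x with hF
  have hpt : ∀ x, |∑ k ∈ Finset.range (n + 1),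
      a k * branchSgn θ k * branchWt k * haarP (branchI θ k) x|
      = |∑ j ∈ Finset.range (n+1), F j x| := by
    intro x
    rw [abel θ a n x]
    congr 1
    rw [Finset.sum_range_succ]
    congr 1
    · exact Finset.sum_congr rfl fun j hj => by
        simp [hF, (Finset.mem_range.mp hj).ne]
    · simp [hF]
  calc (∫ x, |∑ k ∈ Finset.range (n + 1),
        a k * branchSgn θ k * branchWt k * haarP (branchI θ k) x|)
      = ∫ x, |∑ j ∈ Finset.range (n+1), F j x| :=
        integral_congr_ae (Filter.Eventually.of_forall hpt)
    _ ≤ ∑ j ∈ Finset.range (n+1), ∫ x, |F j x| :=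
        integral_abs_sum_le _ _ fun j _ => integrable_G _ j _
    _ = ∑ j ∈ Finset.range (n+1), |if j = n then a n else a j - a (j+1)| :=
        Finset.sum_congr rfl fun j _ => integral_absG _ j _
    _ = (∑ k ∈ Finset.Icc 1 n, |a k - a (k - 1)|) + |a n| := by
        rw [Finset.sum_range_succ, if_pos rfl, sum_Icc_abs a n]
        congr 1
        exact Finset.sum_congr rfl fun j hj => by
          rw [if_neg (Finset.mem_range.mp hj).ne]


end
end

section
/- Let A ⊆ D^+ be a collection of dyadic intervals (possibly including ∅) that arises as the set of all initial segments of a nonempty family of branches (i.e., A is a union over branches of their members). Then the Haar multiplier P_A with coefficients a_I = 1 for I ∈ A and a_I = 0 otherwise satisfies ‖P_A‖_{L_1→L_1} ≤ 1, and hence P_A is a norm-one projection onto the closed span of {h_I : I ∈ A} in L_1. -/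
open MeasureTheory Filter Set
open scoped ENNReal

noncomputable section
open Classical

namespace Statement4Aux

open scoped Topology symmDiff

/-! ### Dyadic interval arithmetic -/

lemma dyI_zero : dyI 0 0 = Set.Ico (0:ℝ) 1 := by
  simp [dyI]

lemma two_pow_pos (n : ℕ) : (0:ℝ) < 2 ^ n := by positivity

lemma dyI_union (n i : ℕ) : dyI (n+1) (2*i) ∪ dyI (n+1) (2*i+1) = dyI n i := by
  unfold dyI
  push_cast
  have h1 : ((2:ℝ)*i)/2^(n+1) = (i:ℝ)/2^n := by rw [pow_succ]; ring
  have h2 : ((2:ℝ)*i+1+1)/2^(n+1) = ((i:ℝ)+1)/2^n := by rw [pow_succ]; ring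
  rw [h1, h2]
  refine Set.Ico_union_Ico_eq_Ico ?_ ?_
  · rw [div_le_div_iff₀ (two_pow_pos n) (two_pow_pos (n+1)), pow_succ]
    nlinarith [two_pow_pos n]
  · rw [div_le_div_iff₀ (two_pow_pos (n+1)) (two_pow_pos n), pow_succ]
    nlinarith [two_pow_pos n]

lemma dyI_left_subset (n i : ℕ) : dyI (n+1) (2*i) ⊆ dyI n i := by
  rw [← dyI_union n i]; exact Set.subset_union_left

lemma dyI_right_subset (n i : ℕ) : dyI (n+1) (2*i+1) ⊆ dyI n i := by
  rw [← dyI_union n i]; exact Set.subset_union_right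

lemma dyI_nonempty (n i : ℕ) : (dyI n i).Nonempty := by
  refine Set.nonempty_Ico.2 ?_
  rw [div_lt_div_iff₀ (two_pow_pos n) (two_pow_pos n)]
  nlinarith [two_pow_pos n]

lemma dyI_disjoint {n i j : ℕ} (h : i ≠ j) : Disjoint (dyI n i) (dyI n j) := by
  rcases Nat.lt_or_ge i j with hij | hij
  · refine Set.Ico_disjoint_Ico.2 ?_
    refine le_trans (min_le_left _ _) (le_trans ?_ (le_max_right _ _))
    have : (i:ℝ) + 1 ≤ j := by exact_mod_cast hij
    gcongr
  · have hij' : j < i := lt_of_le_of_ne hij (Ne.symm h)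
    refine Set.Ico_disjoint_Ico.2 ?_
    refine le_trans (min_le_right _ _) (le_trans ?_ (le_max_left _ _))
    have : (j:ℝ) + 1 ≤ i := by exact_mod_cast hij'
    gcongr

lemma dyI_half_subset (n j : ℕ) : dyI (n+1) j ⊆ dyI n (j/2) := by
  rcases Nat.even_or_odd j with ⟨q, hq⟩ | ⟨q, hq⟩
  · have : j = 2*q := by omega
    subst this
    have : 2*q/2 = q := by omega
    rw [this]; exact dyI_left_subset n q
  · subst hq
    have : (2*q+1)/2 = q := by omega
    rw [this]; exact dyI_right_subset n q

lemma dyI_ancestor (n m j : ℕ) : dyI (n+m) j ⊆ dyI n (j / 2^m) := by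
  induction m generalizing j with
  | zero => simp
  | succ m ih =>
      have h1 : dyI (n+(m+1)) j ⊆ dyI (n+m) (j/2) := dyI_half_subset (n+m) j
      have h2 : dyI (n+m) (j/2) ⊆ dyI n ((j/2) / 2^m) := ih (j/2)
      have h3 : (j/2) / 2^m = j / 2^(m+1) := by
        rw [Nat.div_div_eq_div_mul, pow_succ']
      rw [h3] at h2
      exact h1.trans h2

lemma dyI_valid_subset {n i : ℕ} (h : i < 2^n) : dyI n i ⊆ Set.Ico (0:ℝ) 1 := by
  refine Set.Ico_subset_Ico (by positivity) ?_
  rw [div_le_one (two_pow_pos n)]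
  have : (i:ℝ) + 1 ≤ 2^n := by exact_mod_cast h
  exact this.trans_eq (by ring)

lemma dyI_invalid_disjoint {n i : ℕ} (h : 2^n ≤ i) : Disjoint (dyI n i) (Set.Ico (0:ℝ) 1) := by
  refine Set.Ico_disjoint_Ico.2 ?_
  refine le_trans (min_le_right _ _) (le_trans ?_ (le_max_left _ _))
  rw [le_div_iff₀ (two_pow_pos n), one_mul]
  exact_mod_cast h

lemma measurableSet_dyI (n i : ℕ) : MeasurableSet (dyI n i) := measurableSet_Ico

lemma volume_dyI (n i : ℕ) : volume (dyI n i) = ENNReal.ofReal (1/2^n) := by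
  rw [dyI, Real.volume_Ico]
  congr 1; ring

lemma mu01_dyI_valid {n i : ℕ} (h : i < 2^n) : mu01 (dyI n i) = ENNReal.ofReal (1/2^n) := by
  rw [mu01, Measure.restrict_apply (measurableSet_dyI n i),
    Set.inter_eq_left.2 (dyI_valid_subset h), volume_dyI]

lemma mu01_dyI_invalid {n i : ℕ} (h : 2^n ≤ i) : mu01 (dyI n i) = 0 := by
  rw [mu01, Measure.restrict_apply (measurableSet_dyI n i),
    Set.disjoint_iff_inter_eq_empty.1 (dyI_invalid_disjoint h)]
  simp

/-! ### Branch lemmas -/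

lemma branchI_zero (θ : ℕ → Bool) : branchI θ 0 = none := rfl

lemma branchI_succ (θ : ℕ → Bool) (k : ℕ) : branchI θ (k+1) = some (k, branchPos θ (k+1)) := by
  simp [branchI]

lemma branchPos_one (θ : ℕ → Bool) : branchPos θ 1 = 0 := rfl

lemma branchPos_succ (θ : ℕ → Bool) (k : ℕ) :
    branchPos θ (k+2) = 2 * branchPos θ (k+1) + (if θ (k+1) then 0 else 1) := rfl

lemma branchPos_lt (θ : ℕ → Bool) (k : ℕ) : branchPos θ (k+1) < 2^k := by
  induction k with
  | zero => simp [branchPos_one]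
  | succ k ih =>
      rw [branchPos_succ, pow_succ]
      split <;> omega

lemma suppI_branchI_succ (θ : ℕ → Bool) (k : ℕ) :
    suppI (branchI θ (k+1)) = dyI k (branchPos θ (k+1)) := by
  rw [branchI_succ]; rfl

lemma suppI_branchI_zero (θ : ℕ → Bool) : suppI (branchI θ 0) = Set.Ico (0:ℝ) 1 := rfl

lemma branch_antitone_succ (θ : ℕ → Bool) (k : ℕ) :
    suppI (branchI θ (k+1)) ⊆ suppI (branchI θ k) := by
  cases k with
  | zero =>
      rw [suppI_branchI_succ, branchPos_one, suppI_branchI_zero, dyI_zero]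
  | succ k =>
      rw [suppI_branchI_succ, suppI_branchI_succ, branchPos_succ]
      split
      · simpa using dyI_left_subset k (branchPos θ (k+1))
      · exact dyI_right_subset k (branchPos θ (k+1))

lemma branch_antitone (θ : ℕ → Bool) {k l : ℕ} (h : k ≤ l) :
    suppI (branchI θ l) ⊆ suppI (branchI θ k) := by
  induction l with
  | zero => rw [Nat.le_zero.1 h]
  | succ l ih =>
      rcases Nat.lt_or_ge k (l+1) with h' | h'
      · exact (branch_antitone_succ θ l).trans (ih (by omega))
      · have : k = l + 1 := by omega
        rw [this]

/-! ### The dichotomy -/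

/-- the σ-algebra of sets which either contain `t` or are disjoint from it. -/
def splitAlg (t : Set ℝ) : MeasurableSpace ℝ where
  MeasurableSet' s := t ⊆ s ∨ Disjoint s t
  measurableSet_empty := Or.inr disjoint_bot_left
  measurableSet_compl s hs := by
    rcases hs with h | h
    · exact Or.inr (by simpa [Set.disjoint_compl_left_iff_subset] using h)
    · exact Or.inl h.symm.subset_compl_right
  measurableSet_iUnion f hf := by
    by_cases h : ∃ n, t ⊆ f n
    · obtain ⟨n, hn⟩ := h
      exact Or.inl (hn.trans (Set.subset_iUnion f n))
    · push_neg at h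
      refine Or.inr (Set.disjoint_iUnion_left.2 fun n => ?_)
      rcases hf n with h' | h'
      · exact absurd h' (h n)
      · exact h'

lemma dichotomy_of_generate {G : Set (Set ℝ)} {t : Set ℝ}
    (hG : ∀ u ∈ G, t ⊆ u ∨ Disjoint u t) {s : Set ℝ}
    (hs : MeasurableSet[MeasurableSpace.generateFrom G] s) : t ⊆ s ∨ Disjoint s t :=
  MeasurableSpace.generateFrom_le (m := splitAlg t) (fun u hu => hG u hu) s hs

/-- key combinatorial fact: if `some (n,i) ∉ A` then every member of a branch whose initial
segments all belong to `A` either contains `dyI n i` or is disjoint from it. -/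
lemma branch_dichotomy {A : Set (Option (ℕ × ℕ))} {S : Set (ℕ → Bool)}
    (hAS : A = {I | ∃ θ ∈ S, ∃ k, I = branchI θ k}) {θ : ℕ → Bool} (hθ : θ ∈ S)
    {n i : ℕ} (hJ : (some (n, i) : Option (ℕ × ℕ)) ∉ A) (k : ℕ) :
    dyI n i ⊆ suppI (branchI θ k) ∨ Disjoint (suppI (branchI θ k)) (dyI n i) := by
  rcases Nat.lt_or_ge i (2^n) with hv | hv
  · -- valid index
    cases k with
    | zero => exact Or.inl (by rw [suppI_branchI_zero]; exact dyI_valid_subset hv)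
    | succ k =>
        rw [suppI_branchI_succ]
        set p := branchPos θ (k+1) with hp
        rcases le_or_gt k n with hkn | hkn
        · -- generator at level k ≤ n : the generator is `J` or an ancestor of `J`, or disjoint
          have hsub : dyI n i ⊆ dyI k (i / 2^(n-k)) := by
            have := dyI_ancestor k (n-k) i
            rwa [Nat.add_sub_cancel' hkn] at this
          by_cases hip : i / 2^(n-k) = p
          · exact Or.inl (by rw [← hip]; exact hsub)
          · exact Or.inr (Disjoint.mono_right hsub (dyI_disjoint (fun h => hip h.symm)))
        · -- generator at level k > n : it is strictly below level n
          have hGsub : dyI k p ⊆ dyI n (p / 2^(k-n)) := by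
            have := dyI_ancestor n (k-n) p
            rwa [Nat.add_sub_cancel' hkn.le] at this
          by_cases hq : p / 2^(k-n) = i
          · -- impossible: then `some (n,i)` would be `branchI θ (n+1) ∈ A`
            exfalso
            have h1 : dyI k p ⊆ dyI n i := by rw [← hq]; exact hGsub
            have h2 : dyI k p ⊆ dyI n (branchPos θ (n+1)) := by
              have := branch_antitone θ (show n+1 ≤ k+1 by omega)
              rwa [suppI_branchI_succ, suppI_branchI_succ] at this
            have hne : ¬ Disjoint (dyI n i) (dyI n (branchPos θ (n+1))) := by
              obtain ⟨x, hx⟩ := dyI_nonempty k p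
              exact Set.not_disjoint_iff.2 ⟨x, h1 hx, h2 hx⟩
            have heq : i = branchPos θ (n+1) := by
              by_contra hiq
              exact hne (dyI_disjoint hiq)
            apply hJ
            rw [hAS]
            exact ⟨θ, hθ, n+1, by rw [branchI_succ, heq]⟩
          · exact Or.inr (Disjoint.mono_left hGsub (dyI_disjoint hq))
  · -- invalid index: everything on the branch is contained in [0,1), disjoint from dyI n i
    refine Or.inr ?_
    have hd : Disjoint (Set.Ico (0:ℝ) 1) (dyI n i) := (dyI_invalid_disjoint hv).symm
    cases k with
    | zero => rw [suppI_branchI_zero]; exact hd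
    | succ k =>
        rw [suppI_branchI_succ]
        exact hd.mono_left (dyI_valid_subset (branchPos_lt θ k))

/-! ### L¹ lemmas -/

instance : IsFiniteMeasure mu01 := ⟨(mu01_ne_top Set.univ).lt_top⟩

lemma indL1_def (s : Set ℝ) (hs : MeasurableSet s) :
    indL1 s hs = indicatorConstLp 1 hs (mu01_ne_top s) (1:ℝ) := rfl

lemma indL1_set_congr {s t : Set ℝ} (hs : MeasurableSet s) (ht : MeasurableSet t) (h : s = t) :
    indL1 s hs = indL1 t ht := by subst h; rfl

lemma indL1_congr_ae {s t : Set ℝ} (hs : MeasurableSet s) (ht : MeasurableSet t)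
    (h : ∀ x ∈ Set.Ico (0:ℝ) 1, x ∈ s ↔ x ∈ t) : indL1 s hs = indL1 t ht := by
  refine Lp.ext (indicatorConstLp_coeFn.trans (.trans ?_ indicatorConstLp_coeFn.symm))
  have h01 : ∀ᵐ x ∂mu01, x ∈ Set.Ico (0:ℝ) 1 := ae_restrict_mem measurableSet_Ico
  filter_upwards [h01] with x hx
  simp only [Set.indicator]
  rw [if_congr (h x hx) rfl rfl]

lemma indL1_union {s t : Set ℝ} (hs : MeasurableSet s) (ht : MeasurableSet t)
    (hd : Disjoint s t) :
    indL1 (s ∪ t) (hs.union ht) = indL1 s hs + indL1 t ht :=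
  indicatorConstLp_disjoint_union hs ht (mu01_ne_top s) (mu01_ne_top t) hd (1:ℝ)

lemma indL1_empty : indL1 (∅ : Set ℝ) MeasurableSet.empty = 0 := indicatorConstLp_empty

lemma haarL1_none : haarL1 none = indL1 (Set.Ico (0:ℝ) 1) measurableSet_Ico := rfl

lemma haarL1_some (n i : ℕ) :
    haarL1 (some (n,i)) = indL1 (dyI (n+1) (2*i)) measurableSet_Ico
      - indL1 (dyI (n+1) (2*i+1)) measurableSet_Ico := rfl

/-- the integral of a Haar function over a set containing or disjoint from its support
vanishes. -/
lemma setIntegral_haar_zero {n i : ℕ} {s : Set ℝ} (hs : MeasurableSet s)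
    (hdi : dyI n i ⊆ s ∨ Disjoint s (dyI n i)) :
    ∫ x in s, (haarL1 (some (n,i)) : Lp ℝ 1 mu01) x ∂mu01 = 0 := by
  set L := dyI (n+1) (2*i) with hL
  set R := dyI (n+1) (2*i+1) with hR
  have hLm : MeasurableSet L := measurableSet_dyI _ _
  have hRm : MeasurableSet R := measurableSet_dyI _ _
  have hcoe : (haarL1 (some (n,i)) : ℝ → ℝ)
      =ᵐ[mu01.restrict s] fun x => (indL1 L hLm : ℝ → ℝ) x - (indL1 R hRm : ℝ → ℝ) x := by
    refine ae_restrict_of_ae ?_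
    rw [haarL1_some]
    exact Lp.coeFn_sub _ _
  rw [integral_congr_ae hcoe, integral_sub
      (L1.integrable_coeFn (indL1 L hLm)).integrableOn
      (L1.integrable_coeFn (indL1 R hRm)).integrableOn]
  rw [indL1_def, indL1_def, setIntegral_indicatorConstLp hs hLm (mu01_ne_top L) (1:ℝ),
    setIntegral_indicatorConstLp hs hRm (mu01_ne_top R) (1:ℝ)]
  have hmeq : mu01 (L ∩ s) = mu01 (R ∩ s) := by
    rcases hdi with h | h
    · rw [Set.inter_eq_left.2 ((dyI_left_subset n i).trans h),
        Set.inter_eq_left.2 ((dyI_right_subset n i).trans h)]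
      rcases Nat.lt_or_ge i (2^n) with hv | hv
      · rw [mu01_dyI_valid (show 2*i < 2^(n+1) by rw [pow_succ]; omega),
          mu01_dyI_valid (show 2*i+1 < 2^(n+1) by rw [pow_succ]; omega)]
      · rw [mu01_dyI_invalid (show 2^(n+1) ≤ 2*i by rw [pow_succ]; omega),
          mu01_dyI_invalid (show 2^(n+1) ≤ 2*i+1 by rw [pow_succ]; omega)]
    · have h1 : L ∩ s = ∅ := by
        rw [← Set.subset_empty_iff]
        intro x ⟨hx1, hx2⟩
        exact (Set.disjoint_right.1 h) (dyI_left_subset n i hx1) hx2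
      have h2 : R ∩ s = ∅ := by
        rw [← Set.subset_empty_iff]
        intro x ⟨hx1, hx2⟩
        exact (Set.disjoint_right.1 h) (dyI_right_subset n i hx1) hx2
      rw [h1, h2]
  rw [measureReal_def, measureReal_def, hmeq]
  ring

/-! ### Density of the Haar system in L¹ -/

/-- the closed linear span of the full Haar system in `L₁`. -/
def V : Submodule ℝ (Lp ℝ 1 mu01) := (Submodule.span ℝ (Set.range haarL1)).topologicalClosure

lemma mem_span_dyI {n i : ℕ} (h : i < 2^n) :
    indL1 (dyI n i) (measurableSet_dyI n i) ∈ Submodule.span ℝ (Set.range haarL1) := by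
  induction n generalizing i with
  | zero =>
      interval_cases i
      rw [indL1_set_congr _ measurableSet_Ico dyI_zero, ← haarL1_none]
      exact Submodule.subset_span ⟨none, rfl⟩
  | succ n ih =>
      set j := i / 2 with hj
      have hj2 : j < 2^n := by
        rw [hj]
        omega
      have hJ := ih hj2
      have hhaar : haarL1 (some (n,j)) ∈ Submodule.span ℝ (Set.range haarL1) :=
        Submodule.subset_span ⟨some (n,j), rfl⟩
      have hsplit : indL1 (dyI n j) (measurableSet_dyI n j)
          = indL1 (dyI (n+1) (2*j)) (measurableSet_dyI _ _)
            + indL1 (dyI (n+1) (2*j+1)) (measurableSet_dyI _ _) := by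
        rw [← indL1_union (measurableSet_dyI _ _) (measurableSet_dyI _ _)
          (dyI_disjoint (by omega))]
        exact indL1_set_congr _ _ (dyI_union n j).symm
      have hLmem : indL1 (dyI (n+1) (2*j)) (measurableSet_dyI _ _)
          ∈ Submodule.span ℝ (Set.range haarL1) := by
        have h2 : (2:ℝ) • indL1 (dyI (n+1) (2*j)) (measurableSet_dyI _ _)
            = indL1 (dyI n j) (measurableSet_dyI n j) + haarL1 (some (n,j)) := by
          rw [hsplit, haarL1_some]
          module
        have := Submodule.add_mem _ hJ hhaar
        rw [← h2] at this
        have h3 := Submodule.smul_mem _ ((2:ℝ)⁻¹) this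
        rwa [smul_smul, inv_mul_cancel₀ (by norm_num), one_smul] at h3
      have hRmem : indL1 (dyI (n+1) (2*j+1)) (measurableSet_dyI _ _)
          ∈ Submodule.span ℝ (Set.range haarL1) := by
        have h2 : indL1 (dyI (n+1) (2*j+1)) (measurableSet_dyI _ _)
            = indL1 (dyI n j) (measurableSet_dyI n j)
              - indL1 (dyI (n+1) (2*j)) (measurableSet_dyI _ _) := by
          rw [hsplit]; abel
        rw [h2]
        exact Submodule.sub_mem _ hJ hLmem
      rcases Nat.even_or_odd i with ⟨q, hq⟩ | ⟨q, hq⟩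
      · have : i = 2*j := by omega
        rw [indL1_set_congr _ (measurableSet_dyI (n+1) (2*j)) (by rw [this])]
        exact hLmem
      · have : i = 2*j+1 := by omega
        rw [indL1_set_congr _ (measurableSet_dyI (n+1) (2*j+1)) (by rw [this])]
        exact hRmem

lemma mem_span_Ico_dyadic (n : ℕ) : ∀ k : ℕ, k ≤ 2^n →
    indL1 (Set.Ico 0 ((k:ℝ)/2^n)) measurableSet_Ico ∈ Submodule.span ℝ (Set.range haarL1) := by
  intro k
  induction k with
  | zero =>
      intro _
      rw [indL1_set_congr _ MeasurableSet.empty (by simp), indL1_empty]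
      exact Submodule.zero_mem _
  | succ k ih =>
      intro hk
      have hk' : k ≤ 2^n := by omega
      have hset : Set.Ico (0:ℝ) (((k:ℕ)+1:ℕ)/2^n : ℝ) = Set.Ico 0 ((k:ℝ)/2^n) ∪ dyI n k := by
        rw [dyI]
        push_cast
        refine (Set.Ico_union_Ico_eq_Ico (by positivity) ?_).symm
        rw [div_le_div_iff₀ (two_pow_pos n) (two_pow_pos n)]
        nlinarith [two_pow_pos n]
      rw [indL1_set_congr _ (measurableSet_Ico.union (measurableSet_dyI n k)) hset,
        indL1_union measurableSet_Ico (measurableSet_dyI n k) ?_]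
      · exact Submodule.add_mem _ (ih hk') (mem_span_dyI (by omega))
      · refine Set.Ico_disjoint_Ico.2 ?_
        simp [dyI]

lemma mem_V_Ico_zero {b : ℝ} (hb1 : b ≤ 1) :
    indL1 (Set.Ico 0 b) measurableSet_Ico ∈ V := by
  haveI : Fact ((1:ℝ≥0∞) ≤ 1) := ⟨le_rfl⟩
  rcases le_or_gt b 0 with hb0 | hb0
  · rw [indL1_set_congr _ MeasurableSet.empty (Set.Ico_eq_empty (by linarith)), indL1_empty]
    exact Submodule.zero_mem _
  -- approximate from inside by dyadic intervals
  have hmain : Tendsto (fun nn : ℕ => indL1 (Set.Ico 0 ((⌊b * 2^nn⌋₊ : ℝ)/2^nn)) measurableSet_Ico)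
      atTop (𝓝 (indL1 (Set.Ico 0 b) measurableSet_Ico)) := by
    rw [indL1_def]
    simp only [indL1_def]
    refine tendsto_indicatorConstLp_set ENNReal.one_ne_top ?_
    have hbound : ∀ nn : ℕ, mu01 (Set.Ico 0 ((⌊b * 2^nn⌋₊ : ℝ)/2^nn) ∆ Set.Ico 0 b)
        ≤ ENNReal.ofReal ((1:ℝ)/2^nn) := by
      intro nn
      have hle : (⌊b * 2^nn⌋₊ : ℝ)/2^nn ≤ b := by
        rw [div_le_iff₀ (two_pow_pos nn)]
        exact Nat.floor_le (by positivity)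
      have hgt : b - 1/2^nn < (⌊b * 2^nn⌋₊ : ℝ)/2^nn := by
        rw [sub_lt_iff_lt_add, ← add_div, lt_div_iff₀ (two_pow_pos nn)]
        exact Nat.lt_floor_add_one (b * 2^nn)
      have hsymm : Set.Ico (0:ℝ) ((⌊b * 2^nn⌋₊ : ℝ)/2^nn) ∆ Set.Ico 0 b
          = Set.Ico ((⌊b * 2^nn⌋₊ : ℝ)/2^nn) b := by
        rw [Set.symmDiff_def]
        rw [Set.diff_eq_empty.2 (Set.Ico_subset_Ico_right hle), Set.empty_union]
        ext x
        simp only [Set.mem_diff, Set.mem_Ico, not_and, not_lt]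
        constructor
        · rintro ⟨⟨hx0, hxb⟩, h2⟩
          exact ⟨h2 hx0, hxb⟩
        · rintro ⟨hcx, hxb⟩
          exact ⟨⟨le_trans (by positivity) hcx, hxb⟩, fun _ => hcx⟩
      rw [hsymm]
      calc mu01 (Set.Ico ((⌊b * 2^nn⌋₊ : ℝ)/2^nn) b)
          ≤ volume (Set.Ico ((⌊b * 2^nn⌋₊ : ℝ)/2^nn) b) := by
            rw [mu01]; exact Measure.restrict_le_self _
        _ = ENNReal.ofReal (b - (⌊b * 2^nn⌋₊ : ℝ)/2^nn) := Real.volume_Ico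
        _ ≤ ENNReal.ofReal ((1:ℝ)/2^nn) := ENNReal.ofReal_le_ofReal (by linarith)
    have hlim : Tendsto (fun nn : ℕ => ENNReal.ofReal ((1:ℝ)/2^nn)) atTop (𝓝 0) := by
      rw [show (0:ℝ≥0∞) = ENNReal.ofReal 0 by simp]
      refine ENNReal.tendsto_ofReal ?_
      simp_rw [one_div, ← inv_pow]
      exact tendsto_pow_atTop_nhds_zero_of_lt_one (by norm_num) (by norm_num)
    exact tendsto_of_tendsto_of_tendsto_of_le_of_le tendsto_const_nhds hlim
      (fun _ => zero_le) hbound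
  refine IsClosed.mem_of_tendsto (Submodule.isClosed_topologicalClosure _) hmain ?_
  refine Filter.Eventually.of_forall fun nn => ?_
  have hfl : ⌊b * 2^nn⌋₊ ≤ 2^nn := by
    refine Nat.floor_le_of_le ?_
    calc b * 2^nn ≤ 1 * 2^nn := by nlinarith [two_pow_pos nn]
      _ = ((2^nn : ℕ) : ℝ) := by push_cast; ring
  exact Submodule.le_topologicalClosure _ (mem_span_Ico_dyadic nn _ hfl)

lemma mem_V_Ico {a b : ℝ} (h0 : 0 ≤ a) (hb1 : b ≤ 1) :
    indL1 (Set.Ico a b) measurableSet_Ico ∈ V := by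
  rcases le_or_gt b a with hab | hab
  · rw [indL1_set_congr _ MeasurableSet.empty (Set.Ico_eq_empty (by exact fun h => absurd h (not_lt.2 hab))), indL1_empty]
    exact Submodule.zero_mem _
  · have hsplit : indL1 (Set.Ico 0 b) measurableSet_Ico
        = indL1 (Set.Ico 0 a) measurableSet_Ico + indL1 (Set.Ico a b) measurableSet_Ico := by
      rw [← indL1_union measurableSet_Ico measurableSet_Ico (Set.Ico_disjoint_Ico_same)]
      exact indL1_set_congr _ _ (Set.Ico_union_Ico_eq_Ico h0 hab.le).symm
    have h1 := mem_V_Ico_zero hb1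
    have h2 := mem_V_Ico_zero (show a ≤ 1 by linarith)
    have : indL1 (Set.Ico a b) measurableSet_Ico
        = indL1 (Set.Ico 0 b) measurableSet_Ico - indL1 (Set.Ico 0 a) measurableSet_Ico := by
      rw [hsplit]; abel
    rw [this]
    exact Submodule.sub_mem _ h1 h2

lemma mem_V_inter01 {s : Set ℝ} (hs : MeasurableSet s) :
    indL1 s hs = indL1 (s ∩ Set.Ico 0 1) (hs.inter measurableSet_Ico) :=
  indL1_congr_ae _ _ (fun x hx => by simp [hx])

lemma mem_V_ind {s : Set ℝ} (hs : MeasurableSet s) : indL1 s hs ∈ V := by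
  haveI : Fact ((1:ℝ≥0∞) ≤ 1) := ⟨le_rfl⟩
  have h_eq : (inferInstance : MeasurableSpace ℝ)
      = MeasurableSpace.generateFrom { S : Set ℝ | ∃ (l u : ℝ), l < u ∧ Set.Ico l u = S } :=
    (BorelSpace.measurable_eq (α := ℝ)).trans (borel_eq_generateFrom_Ico ℝ)
  have key : ∀ ⦃t : Set ℝ⦄, MeasurableSet t → ∀ ht : MeasurableSet t, indL1 t ht ∈ V := by
    refine MeasurableSpace.induction_on_inter h_eq (isPiSystem_Ico (id : ℝ → ℝ) id) ?_ ?_ ?_ ?_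
    · intro _
      rw [indL1_set_congr _ MeasurableSet.empty rfl, indL1_empty]
      exact Submodule.zero_mem _
    · rintro t ⟨l, u, hlu, rfl⟩ ht
      rw [mem_V_inter01 ht, indL1_set_congr _ measurableSet_Ico (Set.Ico_inter_Ico)]
      exact mem_V_Ico (le_max_right _ _) (min_le_right _ _)
    · intro t htm hC htc
      have h1 : indL1 (Set.Ico (0:ℝ) 1) measurableSet_Ico ∈ V := by
        rw [← haarL1_none]
        exact Submodule.le_topologicalClosure _ (Submodule.subset_span ⟨none, rfl⟩)
      have h2 : indL1 (t ∩ Set.Ico 0 1) (htm.inter measurableSet_Ico) ∈ V := by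
        rw [← mem_V_inter01 htm]
        exact hC htm
      have hsplit : indL1 (Set.Ico (0:ℝ) 1) measurableSet_Ico
          = indL1 (t ∩ Set.Ico 0 1) (htm.inter measurableSet_Ico)
            + indL1 (tᶜ ∩ Set.Ico 0 1) (htm.compl.inter measurableSet_Ico) := by
        rw [← indL1_union (htm.inter measurableSet_Ico) (htm.compl.inter measurableSet_Ico)
          (Disjoint.mono Set.inter_subset_left Set.inter_subset_left disjoint_compl_right)]
        refine indL1_set_congr _ _ ?_
        rw [← Set.union_inter_distrib_right, Set.union_compl_self, Set.univ_inter]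
      rw [mem_V_inter01 htm.compl]
      have : indL1 (tᶜ ∩ Set.Ico 0 1) (htm.compl.inter measurableSet_Ico)
          = indL1 (Set.Ico (0:ℝ) 1) measurableSet_Ico
            - indL1 (t ∩ Set.Ico 0 1) (htm.inter measurableSet_Ico) := by
        rw [hsplit]; abel
      rw [this]
      exact Submodule.sub_mem _ h1 h2
    · intro f hdisj hfm hC
      intro hU
      -- partial unions
      have hpartm : ∀ n : ℕ, MeasurableSet (⋃ i < n, f i) :=
        fun n => MeasurableSet.biUnion (Set.to_countable _) (fun i _ => hfm i)
      have hpart : ∀ n : ℕ, indL1 (⋃ i < n, f i) (hpartm n) ∈ V := by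
        intro n
        induction n with
        | zero =>
            rw [indL1_set_congr _ MeasurableSet.empty (by simp), indL1_empty]
            exact Submodule.zero_mem _
        | succ n ih =>
            have hdis : Disjoint (⋃ i < n, f i) (f n) := by
              refine Set.disjoint_left.2 fun x hx hx' => ?_
              obtain ⟨i, hi, hxi⟩ := Set.mem_iUnion₂.1 hx
              exact Set.disjoint_left.1 (hdisj (show i ≠ n by omega)) hxi hx'
            rw [indL1_set_congr _ ((hpartm n).union (hfm n)) (Set.biUnion_lt_succ f n),
              indL1_union (hpartm n) (hfm n) hdis]
            exact Submodule.add_mem _ ih (hC n (hfm n))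
      -- the tail measures tend to zero
      have htot : ∑' i, mu01 (f i) ≠ ⊤ := by
        rw [← measure_iUnion hdisj hfm]
        exact mu01_ne_top _
      have htail : Tendsto (fun n => ∑' i, mu01 (f (i + n))) atTop (𝓝 0) :=
        ENNReal.tendsto_sum_nat_add (fun i => mu01 (f i)) htot
      have hsymm_le : ∀ n : ℕ, mu01 ((⋃ i < n, f i) ∆ (⋃ i, f i)) ≤ ∑' i, mu01 (f (i + n)) := by
        intro n
        have hsub : (⋃ i < n, f i) ∆ (⋃ i, f i) ⊆ ⋃ i, f (i + n) := by
          rw [Set.symmDiff_def]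
          rw [Set.diff_eq_empty.2 (Set.iUnion₂_subset fun i _ => Set.subset_iUnion f i),
            Set.empty_union]
          rintro x ⟨hx1, hx2⟩
          obtain ⟨j, hj⟩ := Set.mem_iUnion.1 hx1
          have hjn : n ≤ j := by
            by_contra hc
            exact hx2 (Set.mem_iUnion₂.2 ⟨j, by omega, hj⟩)
          exact Set.mem_iUnion.2 ⟨j - n, by rwa [Nat.sub_add_cancel hjn]⟩
        calc mu01 ((⋃ i < n, f i) ∆ (⋃ i, f i)) ≤ mu01 (⋃ i, f (i + n)) := measure_mono hsub
          _ ≤ ∑' i, mu01 (f (i + n)) := measure_iUnion_le _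
      have hsd : Tendsto (fun n => mu01 ((⋃ i < n, f i) ∆ (⋃ i, f i))) atTop (𝓝 0) :=
        tendsto_of_tendsto_of_tendsto_of_le_of_le tendsto_const_nhds htail
          (fun _ => zero_le) hsymm_le
      have hmain : Tendsto (fun n : ℕ => indL1 (⋃ i < n, f i) (hpartm n)) atTop
          (𝓝 (indL1 (⋃ i, f i) hU)) := by
        simp only [indL1_def]
        exact tendsto_indicatorConstLp_set ENNReal.one_ne_top hsd
      exact IsClosed.mem_of_tendsto (Submodule.isClosed_topologicalClosure _) hmain
        (Filter.Eventually.of_forall hpart)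
  exact key hs hs

lemma V_eq_top : V = ⊤ := by
  haveI : Fact ((1:ℝ≥0∞) ≤ 1) := ⟨le_rfl⟩
  rw [Submodule.eq_top_iff']
  refine Lp.induction ENNReal.one_ne_top (fun f => f ∈ V) ?_ ?_ ?_
  · intro c s hs hμs
    rw [Lp.simpleFunc.coe_indicatorConst]
    have : (indicatorConstLp 1 hs hμs.ne c : Lp ℝ 1 mu01) = c • indL1 s hs := by
      refine Lp.ext ?_
      filter_upwards [indicatorConstLp_coeFn (p := 1) (hs := hs) (hμs := hμs.ne) (c := c),
        Lp.coeFn_smul c (indL1 s hs),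
        indicatorConstLp_coeFn (p := 1) (hs := hs) (hμs := mu01_ne_top s) (c := (1:ℝ))]
        with x h1 h2 h3
      rw [h1, h2]
      simp only [Pi.smul_apply]
      rw [indL1_def, h3]
      by_cases hx : x ∈ s <;> simp [Set.indicator, hx]
    rw [this]
    exact Submodule.smul_mem _ _ (mem_V_ind hs)
  · intro f g hf hg _ hfV hgV
    exact Submodule.add_mem _ hfV hgV
  · exact Submodule.isClosed_topologicalClosure _


/-! ### m-measurability of Haar functions indexed by `A` -/

/-- the σ-algebra generated by the supports of the members of `A`. -/
def mA (A : Set (Option (ℕ × ℕ))) : MeasurableSpace ℝ :=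
  MeasurableSpace.generateFrom (suppI '' A)

lemma mA_def (A : Set (Option (ℕ × ℕ))) :
    mA A = MeasurableSpace.generateFrom (suppI '' A) := rfl


lemma haar_aesm {A : Set (Option (ℕ × ℕ))} {S : Set (ℕ → Bool)}
    (hAS : A = {I | ∃ θ ∈ S, ∃ k, I = branchI θ k}) {I : Option (ℕ × ℕ)} (hmem : I ∈ A) :
    AEStronglyMeasurable[MeasurableSpace.generateFrom (suppI '' A)]
      (haarL1 I : ℝ → ℝ) mu01 := by
  obtain ⟨θ, hθ, k, hIk⟩ : ∃ θ ∈ S, ∃ k, I = branchI θ k := by rw [hAS] at hmem; exact hmem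
  subst hIk
  set m := MeasurableSpace.generateFrom (suppI '' A) with hmdef
  cases k with
  | zero =>
      rw [branchI_zero] at hmem ⊢
      have hms : MeasurableSet[m] (Set.Ico (0:ℝ) 1) :=
        MeasurableSpace.measurableSet_generateFrom ⟨none, hmem, rfl⟩
      refine ⟨(Set.Ico (0:ℝ) 1).indicator (fun _ => (1:ℝ)),
        (@stronglyMeasurable_const ℝ ℝ m _).indicator hms, ?_⟩
      rw [haarL1_none]
      exact indicatorConstLp_coeFn
  | succ k =>
      have hmem2 : branchI θ (k+2) ∈ A := by rw [hAS]; exact ⟨θ, hθ, k+2, rfl⟩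
      set p := branchPos θ (k+1) with hp
      have hJ : MeasurableSet[m] (dyI k p) :=
        MeasurableSpace.measurableSet_generateFrom
          ⟨branchI θ (k+1), hmem, by rw [suppI_branchI_succ]⟩
      have hchild : MeasurableSet[m] (dyI (k+1) (branchPos θ (k+2))) :=
        MeasurableSpace.measurableSet_generateFrom
          ⟨branchI θ (k+2), hmem2, by rw [suppI_branchI_succ]⟩
      have hLR : MeasurableSet[m] (dyI (k+1) (2*p)) ∧ MeasurableSet[m] (dyI (k+1) (2*p+1)) := by
        rw [branchPos_succ] at hchild
        by_cases hb : θ (k+1)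
        · rw [if_pos hb, add_zero] at hchild
          refine ⟨hchild, ?_⟩
          have hRd : dyI (k+1) (2*p+1) = dyI k p \ dyI (k+1) (2*p) := by
            rw [← dyI_union k p,
              Set.union_diff_cancel_left (Set.disjoint_iff.1 (dyI_disjoint (by omega)))]
          rw [hRd]; exact hJ.diff hchild
        · rw [if_neg hb] at hchild
          refine ⟨?_, hchild⟩
          have hLd : dyI (k+1) (2*p) = dyI k p \ dyI (k+1) (2*p+1) := by
            rw [← dyI_union k p,
              Set.union_diff_cancel_right (Set.disjoint_iff.1 (dyI_disjoint (by omega)))]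
          rw [hLd]; exact hJ.diff hchild
      rw [branchI_succ]
      refine ⟨fun x => (dyI (k+1) (2*p)).indicator (fun _ => (1:ℝ)) x
          - (dyI (k+1) (2*p+1)).indicator (fun _ => (1:ℝ)) x,
        ((@stronglyMeasurable_const ℝ ℝ m _).indicator hLR.1).sub
          ((@stronglyMeasurable_const ℝ ℝ m _).indicator hLR.2), ?_⟩
      rw [haarL1_some]
      filter_upwards [Lp.coeFn_sub (indL1 (dyI (k+1) (2*p)) (measurableSet_dyI _ _))
          (indL1 (dyI (k+1) (2*p+1)) (measurableSet_dyI _ _)),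
        indicatorConstLp_coeFn (p := 1) (hs := measurableSet_dyI (k+1) (2*p))
          (hμs := mu01_ne_top _) (c := (1:ℝ)),
        indicatorConstLp_coeFn (p := 1) (hs := measurableSet_dyI (k+1) (2*p+1))
          (hμs := mu01_ne_top _) (c := (1:ℝ))] with x h1 h2 h3
      rw [h1, Pi.sub_apply]
      rw [indL1_def, indL1_def, h2, h3]


end Statement4Aux
theorem statement4 (A : Set (Option (ℕ × ℕ)))
    (hA : ∃ S : Set (ℕ → Bool), S.Nonempty ∧ A = {I | ∃ θ ∈ S, ∃ k, I = branchI θ k}) :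
    ∃ D : Lp ℝ 1 mu01 →L[ℝ] Lp ℝ 1 mu01,
      (∀ I, D (haarL1 I) = A.indicator (fun _ => (1 : ℝ)) I • haarL1 I) ∧
      ‖D‖ ≤ 1 ∧ D.comp D = D ∧
      Set.range D = ((Submodule.span ℝ (haarL1 '' A)).topologicalClosure : Set (Lp ℝ 1 mu01)) := by
  obtain ⟨S, ⟨θ₀, hθ₀⟩, hAS⟩ := hA
  have hnone : (none : Option (ℕ × ℕ)) ∈ A := by rw [hAS]; exact ⟨θ₀, hθ₀, 0, rfl⟩
  have hm : Statement4Aux.mA A ≤ Real.measurableSpace := by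
    rw [Statement4Aux.mA_def]
    refine MeasurableSpace.generateFrom_le ?_
    rintro u ⟨I, hI, rfl⟩
    cases I with
    | none => exact measurableSet_Ico
    | some q => exact Statement4Aux.measurableSet_dyI q.1 q.2
  haveI : SigmaFinite (mu01.trim hm) := inferInstance
  -- the multiplier property
  have hmul : ∀ I, condExpL1CLM ℝ hm mu01 (haarL1 I)
      = A.indicator (fun _ => (1 : ℝ)) I • haarL1 I := by
    intro I
    by_cases hIA : I ∈ A
    · rw [Set.indicator_of_mem hIA, one_smul]
      exact condExpL1CLM_of_aestronglyMeasurable' _ (Statement4Aux.haar_aesm hAS hIA)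
    · rw [Set.indicator_of_notMem hIA, zero_smul]
      cases I with
      | none => exact absurd hnone hIA
      | some q =>
          obtain ⟨n, i⟩ := q
          have hdi : ∀ s : Set ℝ, MeasurableSet[Statement4Aux.mA A] s → dyI n i ⊆ s ∨ Disjoint s (dyI n i) := by
            intro s hs
            rw [Statement4Aux.mA_def] at hs
            refine Statement4Aux.dichotomy_of_generate ?_ hs
            rintro u ⟨I', hI', rfl⟩
            obtain ⟨θ, hθ, k, rfl⟩ : ∃ θ ∈ S, ∃ k, I' = branchI θ k := by
              rw [hAS] at hI'; exact hI'
            exact Statement4Aux.branch_dichotomy hAS hθ hIA k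
          have hzero : ∀ s : Set ℝ, MeasurableSet[Statement4Aux.mA A] s → mu01 s < ⊤ →
              ∫ x in s, (condExpL1CLM ℝ hm mu01 (haarL1 (some (n,i))) : ℝ → ℝ) x ∂mu01 = 0 := by
            intro s hs _
            rw [setIntegral_condExpL1CLM _ hs]
            exact Statement4Aux.setIntegral_haar_zero (hm s hs) (hdi s hs)
          have hint : Integrable
              (condExpL1CLM ℝ hm mu01 (haarL1 (some (n,i))) : ℝ → ℝ) mu01 :=
            L1.integrable_coeFn (condExpL1CLM ℝ hm mu01 (haarL1 (some (n,i))))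
          have hae : (condExpL1CLM ℝ hm mu01 (haarL1 (some (n,i))) : ℝ → ℝ) =ᵐ[mu01] 0 :=
            Lp.ae_eq_zero_of_forall_setIntegral_eq_zero' (𝕜 := ℝ) hm _ one_ne_zero
              ENNReal.one_ne_top (fun s _ _ => hint.integrableOn) hzero
              (aestronglyMeasurable_condExpL1CLM _)
          exact Lp.ext (hae.trans (Lp.coeFn_zero ℝ 1 mu01).symm)
  have hidem : ∀ f, condExpL1CLM ℝ hm mu01 (condExpL1CLM ℝ hm mu01 f)
      = condExpL1CLM ℝ hm mu01 f :=
    fun f => condExpL1CLM_of_aestronglyMeasurable' _ (aestronglyMeasurable_condExpL1CLM f)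
  refine ⟨condExpL1CLM ℝ hm mu01, hmul, ?_, ?_, ?_⟩
  · exact L1.norm_setToL1_le (dominatedFinMeasAdditive_condExpInd ℝ hm mu01) zero_le_one
  · exact ContinuousLinearMap.ext fun f => hidem f
  · -- the range
    apply Set.Subset.antisymm
    · rintro y ⟨g, rfl⟩
      have hgV : g ∈ Statement4Aux.V := by
        rw [Statement4Aux.V_eq_top]; exact Submodule.mem_top
      have hg' : g ∈ closure ((Submodule.span ℝ (Set.range haarL1) : Submodule ℝ _) :
          Set (Lp ℝ 1 mu01)) := by
        rw [← Submodule.topologicalClosure_coe]; exact hgV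
      have hDspan : ∀ y ∈ Submodule.span ℝ (Set.range haarL1),
          condExpL1CLM ℝ hm mu01 y ∈ Submodule.span ℝ (haarL1 '' A) := by
        intro y hy
        induction hy using Submodule.span_induction with
        | mem x hx =>
            obtain ⟨I, rfl⟩ := hx
            rw [hmul I]
            by_cases hIA : I ∈ A
            · rw [Set.indicator_of_mem hIA, one_smul]
              exact Submodule.subset_span ⟨I, hIA, rfl⟩
            · rw [Set.indicator_of_notMem hIA, zero_smul]
              exact Submodule.zero_mem _
        | zero => rw [map_zero]; exact Submodule.zero_mem _
        | add x y _ _ hx hy => rw [map_add]; exact Submodule.add_mem _ hx hy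
        | smul c x _ hx => rw [ContinuousLinearMap.map_smul]; exact Submodule.smul_mem _ c hx
      have h2 := image_closure_subset_closure_image
        (f := (condExpL1CLM ℝ hm mu01 : Lp ℝ 1 mu01 → Lp ℝ 1 mu01))
        (s := ((Submodule.span ℝ (Set.range haarL1) : Submodule ℝ _) : Set (Lp ℝ 1 mu01)))
        (condExpL1CLM ℝ hm mu01).continuous
      have h3 : (condExpL1CLM ℝ hm mu01 : Lp ℝ 1 mu01 → Lp ℝ 1 mu01) ''
          ((Submodule.span ℝ (Set.range haarL1) : Submodule ℝ _) : Set (Lp ℝ 1 mu01))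
          ⊆ (Submodule.span ℝ (haarL1 '' A) : Set (Lp ℝ 1 mu01)) := by
        rintro _ ⟨y, hy, rfl⟩; exact hDspan y hy
      rw [Submodule.topologicalClosure_coe]
      exact closure_mono h3 (h2 ⟨g, hg', rfl⟩)
    · intro y hy
      have hWfix : ∀ w ∈ Submodule.span ℝ (haarL1 '' A), condExpL1CLM ℝ hm mu01 w = w := by
        intro w hw
        induction hw using Submodule.span_induction with
        | mem x hx =>
            obtain ⟨I, hIA, rfl⟩ := hx
            rw [hmul I, Set.indicator_of_mem hIA, one_smul]
        | zero => rw [map_zero]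
        | add x y _ _ hx hy => rw [map_add, hx, hy]
        | smul c x _ hx => rw [ContinuousLinearMap.map_smul, hx]
      have hclosed : IsClosed {f : Lp ℝ 1 mu01 | condExpL1CLM ℝ hm mu01 f = f} :=
        isClosed_eq (condExpL1CLM ℝ hm mu01).continuous continuous_id
      have hsub : ((Submodule.span ℝ (haarL1 '' A)).topologicalClosure : Set (Lp ℝ 1 mu01))
          ⊆ {f | condExpL1CLM ℝ hm mu01 f = f} := by
        rw [Submodule.topologicalClosure_coe]
        exact closure_minimal (fun w hw => hWfix w hw) hclosed
      exact ⟨y, hsub hy⟩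

end
end

section
/- Let (ξ_n)_n be a bounded sequence in ℓ_1 and ε > 0. Then there exists an infinite set N = {n_1 < n_2 < ...} ⊆ ℕ such that for every j_0, Σ_{j ≠ j_0} |ξ_{n_{j_0}}(n_j)| ≤ ε. -/
open MeasureTheory Filter Set
open scoped ENNReal

noncomputable section
open Classical

open Topology
lemma ros_tail_bound {g : ℕ → ℝ} (hg : Summable fun m => |g m|) {ι : Type*} (n : ι → ℕ)
    (hn : Function.Injective n) (N : ℕ) (hN : ∀ i, N ≤ n i) :
    ∑' i, |g (n i)| ≤ ∑' m, |g (m + N)| := by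
  have hgt : Summable fun m => |g (m + N)| := (summable_nat_add_iff N).2 hg
  refine (hg.comp_injective hn).tsum_le_tsum_of_inj (fun i => n i - N) (fun i j h => by have h1 := hN i; have h2 := hN j; dsimp only at h; exact hn (by omega))
    (fun c _ => abs_nonneg _) (fun i => le_of_eq (by rw [Nat.sub_add_cancel (hN i)]))
    hgt

lemma ros_tail_small {g : ℕ → ℝ} (hg : Summable fun m => |g m|) {δ : ℝ} (hδ : 0 < δ) :
    ∃ T, ∑' m, |g (m + T)| ≤ δ := by
  have h1 := hg.hasSum.tendsto_sum_nat
  have h2 : Tendsto (fun k => ∑' m, |g (m + k)|) atTop (𝓝 0) := by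
    have heq : (fun k => ∑' m, |g (m + k)|) = fun k => (∑' m, |g m|) - ∑ i ∈ Finset.range k, |g i| := by
      funext k
      have := Summable.sum_add_tsum_nat_add (f := fun m => |g m|) k hg
      linarith
    rw [heq]
    simpa using h1.const_sub (∑' m, |g m|)
  have := (h2.eventually (eventually_le_nhds hδ)).exists
  obtain ⟨T, hT⟩ := this
  exact ⟨T, hT⟩

theorem statement8 (ξ : ℕ → lp (fun _ : ℕ => ℝ) 1) (hb : ∃ M, ∀ n, ‖ξ n‖ ≤ M)
    (ε : ℝ) (hε : 0 < ε) :
    ∃ n : ℕ → ℕ, StrictMono n ∧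
      ∀ j0 : ℕ, ∑' j : {j : ℕ // j ≠ j0}, |(ξ (n j0) : ∀ _ : ℕ, ℝ) (n j.1)| ≤ ε := by
  obtain ⟨M, hM⟩ := hb
  have hε4 : 0 < ε / 4 := by linarith
  -- summability of each ξ n
  have hsξ : ∀ k, Summable fun m => |(ξ k : ∀ _ : ℕ, ℝ) m| := by
    intro k
    have := (lp.memℓp (ξ k)).summable (by norm_num : 0 < (1 : ℝ≥0∞).toReal)
    simpa [Real.norm_eq_abs] using this
  -- coordinate bound
  have hcoord : ∀ k m, |(ξ k : ∀ _ : ℕ, ℝ) m| ≤ M := fun k m => by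
    have := lp.norm_apply_le_norm one_ne_zero (ξ k) m
    rw [Real.norm_eq_abs] at this
    exact this.trans (hM k)
  -- compactness: extract coordinatewise convergent subsequence
  have hK : IsCompact (Set.pi Set.univ fun _ : ℕ => Set.Icc (-M) M) :=
    isCompact_univ_pi fun _ => isCompact_Icc
  have hmem : ∀ k, (ξ k : ℕ → ℝ) ∈ Set.pi Set.univ fun _ : ℕ => Set.Icc (-M) M := by
    intro k m _
    exact abs_le.mp (hcoord k m)
  obtain ⟨a, -, φ, hφ, hconv⟩ := hK.tendsto_subseq hmem
  have hconv' : ∀ m, Tendsto (fun k => (ξ (φ k) : ∀ _ : ℕ, ℝ) m) atTop (𝓝 (a m)) := by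
    intro m
    exact tendsto_pi_nhds.mp hconv m
  -- a is absolutely summable
  have hsa : Summable fun m => |a m| := by
    apply summable_of_sum_range_le (fun m => abs_nonneg _) (c := M)
    intro N
    have hlim : Tendsto (fun k => ∑ m ∈ Finset.range N, |(ξ (φ k) : ∀ _ : ℕ, ℝ) m|)
        atTop (𝓝 (∑ m ∈ Finset.range N, |a m|)) :=
      tendsto_finset_sum _ fun m _ => (hconv' m).abs
    refine le_of_tendsto hlim (Eventually.of_forall fun k => ?_)
    have := lp.sum_rpow_le_norm_rpow (by norm_num : 0 < (1 : ℝ≥0∞).toReal) (ξ (φ k))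
      (Finset.range N)
    simp only [ENNReal.toReal_one, Real.rpow_one, Real.norm_eq_abs] at this
    exact this.trans (hM (φ k))
  -- the difference sequence
  set η : ℕ → ℕ → ℝ := fun q m => (ξ (φ q) : ∀ _ : ℕ, ℝ) m - a m with hη
  have hsη : ∀ q, Summable fun m => |η q m| := by
    intro q
    apply Summable.of_nonneg_of_le (fun m => abs_nonneg _)
      (fun m => (abs_sub _ _).trans_eq rfl) ((hsξ (φ q)).add hsa)
  have hη0 : ∀ m, Tendsto (fun q => |η q m|) atTop (𝓝 0) := by
    intro m
    have : Tendsto (fun q => η q m) atTop (𝓝 0) := by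
      simpa [hη] using (hconv' m).sub_const (a m)
    simpa using this.abs
  -- tail thresholds for each η q
  have hT : ∀ q, ∃ T, ∑' m, |η q (m + T)| ≤ ε / 4 := fun q => ros_tail_small (hsη q) hε4
  choose T hTle using hT
  -- tail threshold for a
  obtain ⟨Na, hNa⟩ := ros_tail_small hsa hε4
  -- the recursive step
  have hstep : ∀ (p : ℕ) (S : Finset ℕ), ∃ q, p < q ∧ T p ≤ q ∧
      ∑ c ∈ S, |η q c| ≤ ε / 4 := by
    intro p S
    have hsum0 : Tendsto (fun q => ∑ c ∈ S, |η q c|) atTop (𝓝 0) := by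
      simpa using tendsto_finset_sum S fun c _ => hη0 c
    obtain ⟨q0, hq0⟩ := (hsum0.eventually (eventually_le_nhds hε4)).exists_forall_of_atTop
    refine ⟨max (max (p + 1) (T p)) q0, ?_, ?_, hq0 _ (le_max_right _ _)⟩
    · exact lt_of_lt_of_le (Nat.lt_succ_self p) (le_trans (le_max_left _ _) (le_max_left _ _))
    · exact le_trans (le_max_right _ _) (le_max_left _ _)
  choose step hstep1 hstep2 hstep3 using hstep
  -- build the subsequence recursively
  set st : ℕ → ℕ × Finset ℕ := fun k =>
    Nat.rec (Na, {φ Na}) (fun _ s => (step s.1 s.2, insert (φ (step s.1 s.2)) s.2)) k with hst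
  set ψ : ℕ → ℕ := fun k => (st k).1 with hψ
  have hstsucc : ∀ k, st (k + 1)
      = (step (st k).1 (st k).2, insert (φ (step (st k).1 (st k).2)) (st k).2) := fun k => rfl
  have hψsucc : ∀ k, ψ (k + 1) = step (ψ k) (st k).2 := fun k => rfl
  have hψmono : StrictMono ψ := strictMono_nat_of_lt_succ fun k => hstep1 _ _
  set n : ℕ → ℕ := fun j => φ (ψ j) with hndef
  have hnmono : StrictMono n := hφ.comp hψmono
  have hS : ∀ k, (st k).2 = (Finset.range (k + 1)).image n := by
    intro k
    induction k with
    | zero =>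
        show ({φ Na} : Finset ℕ) = Finset.image n (Finset.range 1)
        simp [hndef]
        rfl
    | succ k ih =>
        rw [hstsucc k]
        show insert (φ (step (ψ k) (st k).2)) (st k).2
          = Finset.image n (Finset.range (k + 1 + 1))
        conv_rhs => rw [Finset.range_add_one, Finset.image_insert]
        rw [← hψsucc k, ih]
  refine ⟨n, hnmono, ?_⟩
  intro j0
  -- notation
  set h : ℕ → ℝ := fun j => |η (ψ j0) (n j)| with hh
  have hkey : ∀ c, |(ξ (n j0) : ∀ _ : ℕ, ℝ) c| ≤ |η (ψ j0) c| + |a c| := by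
    intro c
    have hrw : (ξ (n j0) : ∀ _ : ℕ, ℝ) c = η (ψ j0) c + a c := by
      simp [hη, hndef]
    rw [hrw]; exact abs_add_le _ _
  have Sη : Summable fun j : ℕ => |η (ψ j0) (n j)| := (hsη (ψ j0)).comp_injective hnmono.injective
  have Sa : Summable fun j : ℕ => |a (n j)| := hsa.comp_injective hnmono.injective
  have Sηs : Summable fun j : {j : ℕ // j ≠ j0} => |η (ψ j0) (n j.1)| :=
    Sη.comp_injective Subtype.val_injective
  have Sas : Summable fun j : {j : ℕ // j ≠ j0} => |a (n j.1)| :=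
    Sa.comp_injective Subtype.val_injective
  -- n j ≥ Na
  have hge : ∀ j, Na ≤ n j := by
    intro j
    have h1 : n 0 ≤ n j := hnmono.monotone (Nat.zero_le j)
    have h2 : Na ≤ n 0 := by
      have : ψ 0 = Na := rfl
      calc Na = ψ 0 := this.symm
        _ ≤ φ (ψ 0) := hφ.le_apply
        _ = n 0 := rfl
    omega
  -- bound for the `a` part
  have ha_part : ∑' j : {j : ℕ // j ≠ j0}, |a (n j.1)| ≤ ε / 4 := by
    refine le_trans ?_ hNa
    exact ros_tail_bound hsa (fun j : {j : ℕ // j ≠ j0} => n j.1)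
      (hnmono.injective.comp Subtype.val_injective) Na (fun j => hge j.1)
  -- bound for the `η` part: split past and future
  have hpast : ∑ j ∈ Finset.range j0, h j ≤ ε / 4 := by
    rcases Nat.eq_zero_or_pos j0 with h0 | hpos
    · subst h0; simp; linarith
    · obtain ⟨k, rfl⟩ := Nat.exists_eq_succ_of_ne_zero hpos.ne'
      have h3 := hstep3 (ψ k) (st k).2
      rw [← hψsucc k, hS k] at h3
      calc ∑ j ∈ Finset.range (k + 1), h j
          = ∑ c ∈ (Finset.range (k + 1)).image n, |η (ψ (k + 1)) c| := by
            rw [Finset.sum_image (fun x _ y _ hxy => hnmono.injective hxy)]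
        _ ≤ ε / 4 := h3
  -- future part
  have hTn : ∀ j : ↑(Set.Ioi j0), T (ψ j0) ≤ n j.1 := by
    intro j
    have hj : j0 + 1 ≤ j.1 := j.2
    calc T (ψ j0) ≤ step (ψ j0) (st j0).2 := hstep2 _ _
      _ = ψ (j0 + 1) := (hψsucc j0).symm
      _ ≤ φ (ψ (j0 + 1)) := hφ.le_apply
      _ = n (j0 + 1) := rfl
      _ ≤ n j.1 := hnmono.monotone hj
  have hfut : ∑' j : ↑(Set.Ioi j0), h j.1 ≤ ε / 4 := by
    refine le_trans ?_ (hTle (ψ j0))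
    exact ros_tail_bound (hsη (ψ j0)) (fun j : ↑(Set.Ioi j0) => n j.1)
      (hnmono.injective.comp Subtype.val_injective) (T (ψ j0)) hTn
  -- splitting the η part
  have hη_part : ∑' j : {j : ℕ // j ≠ j0}, h j.1 ≤ ε / 4 + ε / 4 := by
    have hind : ∀ j : ℕ, Set.indicator {j | j ≠ j0} h j
        = Set.indicator (Set.Iio j0) h j + Set.indicator (Set.Ioi j0) h j := by
      intro j
      by_cases hj : j = j0
      · subst hj
        simp [Set.indicator_apply]
      · rcases lt_or_gt_of_ne hj with hl | hg
        · have h2 : ¬ j0 < j := lt_asymm hl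
          simp [Set.indicator_apply, Set.mem_setOf_eq, Set.mem_Iio, Set.mem_Ioi, hj, hl, h2]
        · have h2 : ¬ j < j0 := lt_asymm hg
          simp [Set.indicator_apply, Set.mem_setOf_eq, Set.mem_Iio, Set.mem_Ioi, hj, hg, h2]
    have hSηn : Summable h := Sη
    calc ∑' j : {j : ℕ // j ≠ j0}, h j.1
        = ∑' j : ℕ, Set.indicator {j | j ≠ j0} h j := tsum_subtype {j : ℕ | j ≠ j0} h
      _ = ∑' j : ℕ, (Set.indicator (Set.Iio j0) h j + Set.indicator (Set.Ioi j0) h j) :=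
          tsum_congr hind
      _ = (∑' j : ℕ, Set.indicator (Set.Iio j0) h j)
          + ∑' j : ℕ, Set.indicator (Set.Ioi j0) h j :=
          Summable.tsum_add (hSηn.indicator _) (hSηn.indicator _)
      _ = (∑ j ∈ Finset.range j0, h j) + ∑' j : ↑(Set.Ioi j0), h j.1 := by
          rw [← tsum_subtype (Set.Ioi j0) h]
          congr 1
          rw [tsum_eq_sum (s := Finset.range j0)
            (fun b hb => Set.indicator_of_notMem (by simpa using Finset.mem_range.not.mp hb) h)]
          exact Finset.sum_congr rfl fun b hb =>
            Set.indicator_of_mem (Set.mem_Iio.mpr (Finset.mem_range.mp hb)) h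
      _ ≤ ε / 4 + ε / 4 := add_le_add hpast hfut
  -- final assembly
  have Sfull : Summable fun j : {j : ℕ // j ≠ j0} => |(ξ (n j0) : ∀ _ : ℕ, ℝ) (n j.1)| :=
    ((hsξ (n j0)).comp_injective hnmono.injective).comp_injective Subtype.val_injective
  calc ∑' j : {j : ℕ // j ≠ j0}, |(ξ (n j0) : ∀ _ : ℕ, ℝ) (n j.1)|
      ≤ ∑' j : {j : ℕ // j ≠ j0}, (|η (ψ j0) (n j.1)| + |a (n j.1)|) :=
        Sfull.tsum_le_tsum (fun j => hkey (n j.1)) (Sηs.add Sas)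
    _ = (∑' j : {j : ℕ // j ≠ j0}, |η (ψ j0) (n j.1)|)
        + ∑' j : {j : ℕ // j ≠ j0}, |a (n j.1)| := Summable.tsum_add Sηs Sas
    _ ≤ (ε / 4 + ε / 4) + ε / 4 := add_le_add hη_part ha_part
    _ ≤ ε := by linarith


end
end

section
/- Let K be a relatively compact subset of a Banach space. For every ε > 0 and η > 0 there is N(K, ε, η) ∈ ℕ such that for every N ≥ N(K, ε, η), every uniform probability space Ω of 2N points partitioned into doubletons {ω_n^{-1}, ω_n^1}, and every G : Ω → K, the map Φ : {−1,1}^N → conv(K) defined by Φ(ε) = (1/N) Σ_{n=1}^N G(ω_n^{ε_n}) satisfies E(Φ) = E(G) and P(‖Φ − E(G)‖ ≥ η) ≤ ε. -/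
open MeasureTheory Filter Set
open scoped ENNReal

noncomputable section
open Classical

namespace Statement10Aux

def sgn {N : ℕ} (n : Fin N) (e : Fin N → Bool) : ℝ := if e n then 1 else -1

lemma sgn_mul_self {N : ℕ} (n : Fin N) (e : Fin N → Bool) : sgn n e * sgn n e = 1 := by
  unfold sgn; split <;> norm_num

lemma norm_sgn {N : ℕ} (n : Fin N) (e : Fin N → Bool) : ‖sgn n e‖ = 1 := by
  unfold sgn; split <;> simp

lemma sgn_eq_one {N : ℕ} {n : Fin N} {e : Fin N → Bool} (h : e n = true) : sgn n e = 1 := by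
  simp [sgn, h]

lemma sgn_eq_neg_one {N : ℕ} {n : Fin N} {e : Fin N → Bool} (h : e n = false) :
    sgn n e = -1 := by
  simp [sgn, h]

def flipAt {N : ℕ} (n : Fin N) : (Fin N → Bool) ≃ (Fin N → Bool) where
  toFun e := Function.update e n (! e n)
  invFun e := Function.update e n (! e n)
  left_inv e := by
    funext m
    rcases eq_or_ne m n with rfl | h
    · simp
    · simp [Function.update_of_ne h]
  right_inv e := by
    funext m
    rcases eq_or_ne m n with rfl | h
    · simp
    · simp [Function.update_of_ne h]

lemma sgn_flip_self {N : ℕ} (n : Fin N) (e : Fin N → Bool) :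
    sgn n (flipAt n e) = - sgn n e := by
  unfold sgn flipAt
  simp only [Equiv.coe_fn_mk, Function.update_self]
  cases e n <;> norm_num

lemma sgn_flip_ne {N : ℕ} {n m : Fin N} (h : m ≠ n) (e : Fin N → Bool) :
    sgn m (flipAt n e) = sgn m e := by
  unfold sgn flipAt
  simp [Function.update_of_ne h]

lemma sum_sgn {N : ℕ} (n : Fin N) : ∑ e : Fin N → Bool, sgn n e = 0 := by
  have h2 := Equiv.sum_comp (flipAt n) (fun e => sgn n e)
  simp only [sgn_flip_self, Finset.sum_neg_distrib] at h2
  linarith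

lemma sum_sgn_mul {N : ℕ} {n m : Fin N} (h : n ≠ m) :
    ∑ e : Fin N → Bool, sgn n e * sgn m e = 0 := by
  have h2 := Equiv.sum_comp (flipAt n) (fun e => sgn n e * sgn m e)
  have h1 : ∀ e, sgn n (flipAt n e) * sgn m (flipAt n e) = -(sgn n e * sgn m e) := by
    intro e
    rw [sgn_flip_self, sgn_flip_ne h.symm]
    ring
  simp only [h1, Finset.sum_neg_distrib] at h2
  linarith

lemma sum_one (N : ℕ) : ∑ _e : Fin N → Bool, (1:ℝ) = 2 ^ N := by
  simp [Finset.card_univ]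

lemma sum_sq_sgn {N : ℕ} (A : Finset (Fin N)) :
    ∑ e : Fin N → Bool, (∑ n ∈ A, sgn n e) ^ 2 = (A.card : ℝ) * 2 ^ N := by
  calc ∑ e : Fin N → Bool, (∑ n ∈ A, sgn n e) ^ 2
      = ∑ e : Fin N → Bool, ∑ n ∈ A, ∑ m ∈ A, sgn n e * sgn m e := by
        refine Finset.sum_congr rfl fun e _ => ?_
        rw [sq, Finset.sum_mul_sum]
    _ = ∑ n ∈ A, ∑ m ∈ A, ∑ e : Fin N → Bool, sgn n e * sgn m e := by
        rw [Finset.sum_comm]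
        exact Finset.sum_congr rfl fun n _ => Finset.sum_comm
    _ = ∑ n ∈ A, ∑ m ∈ A, (if n = m then ((2:ℝ) ^ N) else 0) := by
        refine Finset.sum_congr rfl fun n _ => Finset.sum_congr rfl fun m _ => ?_
        rcases eq_or_ne n m with rfl | h
        · simp only [sgn_mul_self, if_pos rfl]
          exact sum_one N
        · rw [sum_sgn_mul h, if_neg h]
    _ = ∑ _n ∈ A, ((2:ℝ) ^ N) := by
        refine Finset.sum_congr rfl fun n hn => ?_
        rw [Finset.sum_ite_eq A n (fun _ => ((2:ℝ)^N)), if_pos hn]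
    _ = (A.card : ℝ) * 2 ^ N := by rw [Finset.sum_const, nsmul_eq_mul]

lemma card_filter_sq_le {α : Type*} [Fintype α] (f : α → ℝ) (δ : ℝ) (hδ : 0 < δ) :
    ((Finset.univ.filter fun e => δ ≤ |f e|).card : ℝ) ≤ (∑ e, (f e) ^ 2) / δ ^ 2 := by
  rw [le_div_iff₀ (by positivity)]
  calc ((Finset.univ.filter fun e => δ ≤ |f e|).card : ℝ) * δ ^ 2
      = ∑ _e ∈ Finset.univ.filter fun e => δ ≤ |f e|, δ ^ 2 := by
        rw [Finset.sum_const, nsmul_eq_mul]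
    _ ≤ ∑ e ∈ Finset.univ.filter fun e => δ ≤ |f e|, (f e) ^ 2 := by
        refine Finset.sum_le_sum fun e he => ?_
        have h := (Finset.mem_filter.mp he).2
        calc δ ^ 2 ≤ |f e| ^ 2 := pow_le_pow_left₀ hδ.le h 2
          _ = (f e) ^ 2 := sq_abs _
    _ ≤ ∑ e, (f e) ^ 2 :=
        Finset.sum_le_sum_of_subset_of_nonneg (Finset.filter_subset _ _)
          (fun e _ _ => sq_nonneg _)

end Statement10Aux

set_option maxHeartbeats 1000000 in
theorem statement10 {E : Type*} [NormedAddCommGroup E] [NormedSpace ℝ E]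
    (K : Set E) (hK : IsCompact (closure K)) (ε η : ℝ) (hε : 0 < ε) (hη : 0 < η) :
    ∃ N0 : ℕ, 0 < N0 ∧ ∀ N : ℕ, N0 ≤ N → ∀ G : Fin N × Bool → E, (∀ ω, G ω ∈ K) →
      (∀ e : Fin N → Bool, (N : ℝ)⁻¹ • ∑ n : Fin N, G (n, e n) ∈ convexHull ℝ K) ∧
      ((2 ^ N : ℝ)⁻¹ • ∑ e : Fin N → Bool, ((N : ℝ)⁻¹ • ∑ n : Fin N, G (n, e n)) =
        (2 * N : ℝ)⁻¹ • ∑ ω : Fin N × Bool, G ω) ∧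
      ((Finset.univ.filter fun e : Fin N → Bool =>
          η ≤ ‖(N : ℝ)⁻¹ • ∑ n : Fin N, G (n, e n) -
            (2 * N : ℝ)⁻¹ • ∑ ω : Fin N × Bool, G ω‖).card : ℝ) / 2 ^ N ≤ ε := by
  obtain ⟨C0, hC0⟩ := isBounded_iff_forall_norm_le.mp hK.isBounded
  set C : ℝ := max C0 0 with hCdef
  have hC : ∀ x ∈ K, ‖x‖ ≤ C := fun x hx =>
    le_trans (hC0 x (subset_closure hx)) (le_max_left _ _)
  have hCnn : (0:ℝ) ≤ C := le_max_right _ _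
  have htb : TotallyBounded K := TotallyBounded.subset subset_closure hK.totallyBounded
  obtain ⟨t, htfin, htcover⟩ := Metric.totallyBounded_iff.mp htb (η/2) (by positivity)
  set F : Finset E := htfin.toFinset with hFdef
  have hnet : ∀ x ∈ K, ∃ y, y ∈ F ∧ ‖x - y‖ < η/2 := by
    intro x hx
    obtain ⟨y, hy, hxy⟩ := Set.mem_iUnion₂.mp (htcover hx)
    refine ⟨y, htfin.mem_toFinset.mpr hy, ?_⟩
    rw [← dist_eq_norm]
    exact Metric.mem_ball.mp hxy
  choose! π hπF hπd using hnet
  set W : Finset E := (F ×ˢ F).image (fun p => (2:ℝ)⁻¹ • (p.1 - p.2)) with hWdef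
  set m : ℕ := W.card with hmdef
  set δ : ℝ := η / (2 * (m+1) * (C + η)) with hδdef
  have hCη : (0:ℝ) < C + η := by positivity
  have hδpos : 0 < δ := by rw [hδdef]; positivity
  have hδC : δ * (C+η) = η / (2 * ((m:ℝ)+1)) := by
    rw [hδdef]
    field_simp
  have hδkey : (m:ℝ) * (δ * (C+η)) < η/2 := by
    rw [hδC, ← mul_div_assoc, div_lt_div_iff₀ (by positivity) (by norm_num)]
    nlinarith [hη, Nat.cast_nonneg (α := ℝ) m]
  clear_value δ m W F
  refine ⟨⌈(δ^2 * ε)⁻¹⌉₊ + 1, Nat.succ_pos _, ?_⟩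
  intro N hN G hG
  have hN1 : 0 < N := lt_of_lt_of_le (Nat.succ_pos _) hN
  have hNpos : (0:ℝ) < N := by exact_mod_cast hN1
  have hNne : (N:ℝ) ≠ 0 := ne_of_gt hNpos
  rcases Set.eq_empty_or_nonempty K with hKe | hKne
  · exact absurd (hG (⟨0, hN1⟩, true)) (by simp [hKe])
  set a : Fin N → E := fun n => (2:ℝ)⁻¹ • (G (n,true) + G (n,false)) with ha
  set v : Fin N → E := fun n => (2:ℝ)⁻¹ • (G (n,true) - G (n,false)) with hv
  have hGdecomp : ∀ (n : Fin N) (e : Fin N → Bool),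
      G (n, e n) = a n + Statement10Aux.sgn n e • v n := by
    intro n e
    cases h : e n
    · rw [Statement10Aux.sgn_eq_neg_one h]
      simp only [ha, hv]
      module
    · rw [Statement10Aux.sgn_eq_one h]
      simp only [ha, hv]
      module
  have hmean2 : ∑ ω : Fin N × Bool, G ω = ∑ n : Fin N, (2:ℝ) • a n := by
    rw [Fintype.sum_prod_type]
    refine Finset.sum_congr rfl fun n _ => ?_
    rw [Fintype.sum_bool]
    simp only [ha]
    module
  have hhalf : (2 * N : ℝ)⁻¹ • ∑ ω : Fin N × Bool, G ω = (N:ℝ)⁻¹ • ∑ n : Fin N, a n := by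
    rw [hmean2, ← Finset.smul_sum, smul_smul]
    congr 1
    rw [mul_inv]
    ring
  have hPhi : ∀ e : Fin N → Bool,
      (N : ℝ)⁻¹ • ∑ n : Fin N, G (n, e n) - (2 * N : ℝ)⁻¹ • ∑ ω : Fin N × Bool, G ω
        = (N:ℝ)⁻¹ • ∑ n : Fin N, Statement10Aux.sgn n e • v n := by
    intro e
    have h1 : ∑ n : Fin N, G (n, e n)
        = (∑ n : Fin N, a n) + ∑ n : Fin N, Statement10Aux.sgn n e • v n := by
      rw [← Finset.sum_add_distrib]
      exact Finset.sum_congr rfl fun n _ => hGdecomp n e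
    rw [h1, hhalf, smul_add, add_sub_cancel_left]
  have hExp : (2 ^ N : ℝ)⁻¹ • ∑ e : Fin N → Bool, ((N : ℝ)⁻¹ • ∑ n : Fin N, G (n, e n))
      = (2 * N : ℝ)⁻¹ • ∑ ω : Fin N × Bool, G ω := by
    have he : ∀ e : Fin N → Bool, ∑ n : Fin N, G (n, e n)
        = (∑ n : Fin N, a n) + ∑ n : Fin N, Statement10Aux.sgn n e • v n := fun e => by
      rw [← Finset.sum_add_distrib]
      exact Finset.sum_congr rfl fun n _ => hGdecomp n e
    have h1 : ∑ e : Fin N → Bool, ∑ n : Fin N, G (n, e n) = (2^N : ℝ) • ∑ n : Fin N, a n := by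
      simp only [he]
      rw [Finset.sum_add_distrib, Finset.sum_const, Finset.card_univ]
      have hz : ∑ e : Fin N → Bool, ∑ n : Fin N, Statement10Aux.sgn n e • v n = 0 := by
        rw [Finset.sum_comm]
        refine Finset.sum_eq_zero fun n _ => ?_
        rw [← Finset.sum_smul, Statement10Aux.sum_sgn, zero_smul]
      rw [hz, add_zero]
      have hcard : (Fintype.card (Fin N → Bool)) = 2 ^ N := by simp
      rw [hcard, ← Nat.cast_smul_eq_nsmul ℝ]
      norm_cast
    calc (2 ^ N : ℝ)⁻¹ • ∑ e : Fin N → Bool, ((N : ℝ)⁻¹ • ∑ n : Fin N, G (n, e n))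
        = (2 ^ N : ℝ)⁻¹ • ((N:ℝ)⁻¹ • ∑ e : Fin N → Bool, ∑ n : Fin N, G (n, e n)) := by
          rw [← Finset.smul_sum]
      _ = (2 ^ N : ℝ)⁻¹ • ((N:ℝ)⁻¹ • ((2^N : ℝ) • ∑ n : Fin N, a n)) := by rw [h1]
      _ = (N:ℝ)⁻¹ • ∑ n : Fin N, a n := by
          rw [smul_smul, smul_smul]
          congr 1
          have h2N : ((2:ℝ)^N) ≠ 0 := by positivity
          field_simp
      _ = (2 * N : ℝ)⁻¹ • ∑ ω : Fin N × Bool, G ω := hhalf.symm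
  set Gp : Fin N × Bool → E := fun ω => π (G ω) with hGp
  set v' : Fin N → E := fun n => (2:ℝ)⁻¹ • (Gp (n,true) - Gp (n,false)) with hv'
  have hv'mem : ∀ n : Fin N, v' n ∈ W := by
    intro n
    rw [hWdef]
    exact Finset.mem_image.mpr ⟨(Gp (n,true), Gp (n,false)),
      Finset.mem_product.mpr ⟨hπF _ (hG _), hπF _ (hG _)⟩, rfl⟩
  have hnorm2inv : ‖(2:ℝ)⁻¹‖ = 2⁻¹ := by rw [norm_inv, Real.norm_two]
  have hvv' : ∀ n : Fin N, ‖v n - v' n‖ ≤ η / 2 := by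
    intro n
    have h1 : ‖G (n,true) - Gp (n,true)‖ < η/2 := hπd _ (hG _)
    have h2 : ‖G (n,false) - Gp (n,false)‖ < η/2 := hπd _ (hG _)
    have heq : v n - v' n
        = (2:ℝ)⁻¹ • ((G (n,true) - Gp (n,true)) - (G (n,false) - Gp (n,false))) := by
      simp only [hv, hv']
      module
    have h3 := norm_sub_le (G (n,true) - Gp (n,true)) (G (n,false) - Gp (n,false))
    rw [heq, norm_smul, hnorm2inv]
    linarith
  have hGpnorm : ∀ ω : Fin N × Bool, ‖Gp ω‖ ≤ C + η := by
    intro ω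
    have h1 : ‖G ω - Gp ω‖ < η/2 := hπd _ (hG ω)
    have h2 : ‖G ω‖ ≤ C := hC _ (hG ω)
    have h3 : ‖Gp ω‖ ≤ ‖G ω‖ + ‖G ω - Gp ω‖ := by
      have h4 := norm_sub_le (G ω) (G ω - Gp ω)
      simpa using h4
    linarith
  have hv'norm : ∀ n : Fin N, ‖v' n‖ ≤ C + η := by
    intro n
    have h3 := norm_sub_le (Gp (n,true)) (Gp (n,false))
    have h5 := hGpnorm (n,true)
    have h6 := hGpnorm (n,false)
    simp only [hv']
    rw [norm_smul, hnorm2inv]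
    linarith
  set S : E → (Fin N → Bool) → ℝ :=
    fun w e => ∑ n ∈ Finset.univ.filter (fun n => v' n = w), Statement10Aux.sgn n e with hSdef
  have hgroup : ∀ e : Fin N → Bool,
      ∑ n : Fin N, Statement10Aux.sgn n e • v' n = ∑ w ∈ W, S w e • w := by
    intro e
    rw [← Finset.sum_fiberwise_of_maps_to (fun n (_ : n ∈ Finset.univ) => hv'mem n)
      (fun n => Statement10Aux.sgn n e • v' n)]
    refine Finset.sum_congr rfl fun w hw => ?_
    simp only [hSdef]
    rw [Finset.sum_smul]
    refine Finset.sum_congr rfl fun n hn => ?_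
    rw [(Finset.mem_filter.mp hn).2]
  have hfibcard : ∑ w ∈ W, (Finset.univ.filter fun n => v' n = w).card = N := by
    rw [← Finset.card_eq_sum_card_fiberwise (fun n (_ : n ∈ Finset.univ) => hv'mem n),
      Finset.card_univ, Fintype.card_fin]
  have hbad : ∀ e : Fin N → Bool,
      η ≤ ‖(N : ℝ)⁻¹ • ∑ n : Fin N, G (n, e n) -
        (2 * N : ℝ)⁻¹ • ∑ ω : Fin N × Bool, G ω‖ →
      ∃ w ∈ W, (N:ℝ) * δ ≤ |S w e| := by
    intro e he
    by_contra hcon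
    push_neg at hcon
    rw [hPhi e] at he
    have hsplit : ∑ n : Fin N, Statement10Aux.sgn n e • v n
        = (∑ n : Fin N, Statement10Aux.sgn n e • v' n)
          + ∑ n : Fin N, Statement10Aux.sgn n e • (v n - v' n) := by
      rw [← Finset.sum_add_distrib]
      refine Finset.sum_congr rfl fun n _ => ?_
      rw [← smul_add]
      congr 1
      abel
    have herr : ‖(N:ℝ)⁻¹ • ∑ n : Fin N, Statement10Aux.sgn n e • (v n - v' n)‖ ≤ η/2 := by
      rw [norm_smul, norm_inv, Real.norm_natCast]
      have h5 : ‖∑ n : Fin N, Statement10Aux.sgn n e • (v n - v' n)‖ ≤ (N:ℝ) * (η/2) := by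
        refine le_trans (norm_sum_le _ _) ?_
        have hterm : ∀ n : Fin N, ‖Statement10Aux.sgn n e • (v n - v' n)‖ ≤ η/2 := by
          intro n
          rw [norm_smul, Statement10Aux.norm_sgn, one_mul]
          exact hvv' n
        refine le_trans (Finset.sum_le_sum fun n _ => hterm n) ?_
        rw [Finset.sum_const, Finset.card_univ, Fintype.card_fin, nsmul_eq_mul]
      calc (N:ℝ)⁻¹ * ‖∑ n : Fin N, Statement10Aux.sgn n e • (v n - v' n)‖
          ≤ (N:ℝ)⁻¹ * ((N:ℝ) * (η/2)) := mul_le_mul_of_nonneg_left h5 (inv_nonneg.mpr hNpos.le)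
        _ = η/2 := inv_mul_cancel_left₀ hNne _
    have hmain : ‖(N:ℝ)⁻¹ • ∑ n : Fin N, Statement10Aux.sgn n e • v' n‖ < η/2 := by
      rw [hgroup e, norm_smul, norm_inv, Real.norm_natCast]
      have h6 : ‖∑ w ∈ W, S w e • w‖ ≤ (N:ℝ) * ((m:ℝ) * (δ * (C + η))) := by
        refine le_trans (norm_sum_le _ _) ?_
        have hterm : ∀ w ∈ W, ‖S w e • w‖ ≤ (N:ℝ) * δ * (C + η) := by
          intro w hw
          rcases Finset.eq_empty_or_nonempty
              (Finset.univ.filter fun n => v' n = w) with hemp | ⟨n, hn⟩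
          · have hz : S w e = 0 := by
              simp only [hSdef]
              rw [hemp, Finset.sum_empty]
            rw [hz, zero_smul, norm_zero]
            exact le_of_lt (mul_pos (mul_pos hNpos hδpos) hCη)
          · have hwn : v' n = w := (Finset.mem_filter.mp hn).2
            have h7 : ‖w‖ ≤ C + η := hwn ▸ hv'norm n
            rw [norm_smul, Real.norm_eq_abs]
            exact mul_le_mul (le_of_lt (hcon w hw)) h7 (norm_nonneg _) (mul_pos hNpos hδpos).le
        refine le_trans (Finset.sum_le_sum hterm) (le_of_eq ?_)
        rw [Finset.sum_const, nsmul_eq_mul, hmdef]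
        ring
      have h8 : (N:ℝ)⁻¹ * ‖∑ w ∈ W, S w e • w‖ ≤ (m:ℝ) * (δ * (C+η)) := by
        calc (N:ℝ)⁻¹ * ‖∑ w ∈ W, S w e • w‖
            ≤ (N:ℝ)⁻¹ * ((N:ℝ) * ((m:ℝ) * (δ * (C + η)))) :=
              mul_le_mul_of_nonneg_left h6 (inv_nonneg.mpr hNpos.le)
          _ = (m:ℝ) * (δ * (C+η)) := inv_mul_cancel_left₀ hNne _
      exact lt_of_le_of_lt h8 hδkey
    have hcomb : ‖(N:ℝ)⁻¹ • ∑ n : Fin N, Statement10Aux.sgn n e • v n‖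
        ≤ ‖(N:ℝ)⁻¹ • ∑ n : Fin N, Statement10Aux.sgn n e • v' n‖
          + ‖(N:ℝ)⁻¹ • ∑ n : Fin N, Statement10Aux.sgn n e • (v n - v' n)‖ := by
      rw [hsplit, smul_add]
      exact norm_add_le _ _
    linarith
  refine ⟨?_, hExp, ?_⟩
  · intro e
    have hcm := Finset.centerMass_mem_convexHull (Finset.univ : Finset (Fin N))
      (fun n _ => (zero_le_one : (0:ℝ) ≤ 1))
      (by
        rw [Finset.sum_const, Finset.card_univ, Fintype.card_fin, nsmul_eq_mul, mul_one]
        exact hNpos)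
      (fun n _ => hG (n, e n))
    have hcmeq : (Finset.univ : Finset (Fin N)).centerMass (fun _ => (1:ℝ))
        (fun n => G (n, e n)) = (N:ℝ)⁻¹ • ∑ n : Fin N, G (n, e n) := by
      rw [Finset.centerMass]
      simp [Finset.card_univ]
    rwa [hcmeq] at hcm
  · have hsub : (Finset.univ.filter fun e : Fin N → Bool =>
        η ≤ ‖(N : ℝ)⁻¹ • ∑ n : Fin N, G (n, e n) -
          (2 * N : ℝ)⁻¹ • ∑ ω : Fin N × Bool, G ω‖)
        ⊆ W.biUnion (fun w => Finset.univ.filter fun e => (N:ℝ)*δ ≤ |S w e|) := by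
      intro e he
      obtain ⟨w, hw, hwe⟩ := hbad e (Finset.mem_filter.mp he).2
      exact Finset.mem_biUnion.mpr ⟨w, hw, Finset.mem_filter.mpr ⟨Finset.mem_univ _, hwe⟩⟩
    have hcard1 : (((Finset.univ.filter fun e : Fin N → Bool =>
        η ≤ ‖(N : ℝ)⁻¹ • ∑ n : Fin N, G (n, e n) -
          (2 * N : ℝ)⁻¹ • ∑ ω : Fin N × Bool, G ω‖).card : ℝ))
        ≤ ∑ w ∈ W, ((Finset.univ.filter fun e : Fin N → Bool => (N:ℝ)*δ ≤ |S w e|).card : ℝ) := by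
      have h1 := le_trans (Finset.card_le_card hsub) (Finset.card_biUnion_le)
      exact_mod_cast h1
    have hcard2 : ∀ w ∈ W, ((Finset.univ.filter fun e : Fin N → Bool => (N:ℝ)*δ ≤ |S w e|).card : ℝ)
        ≤ ((Finset.univ.filter fun n : Fin N => v' n = w).card : ℝ) * 2^N / ((N:ℝ)*δ)^2 := by
      intro w hw
      have h1 := Statement10Aux.card_filter_sq_le (fun e : Fin N → Bool => S w e)
        ((N:ℝ)*δ) (mul_pos hNpos hδpos)
      have h2 : ∑ e : Fin N → Bool, (S w e)^2
          = ((Finset.univ.filter fun n : Fin N => v' n = w).card : ℝ) * 2^N := by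
        simp only [hSdef]
        exact Statement10Aux.sum_sq_sgn _
      rw [h2] at h1
      exact h1
    have hsumcard : (∑ w ∈ W, ((Finset.univ.filter fun n : Fin N => v' n = w).card : ℝ)) = (N:ℝ) := by
      exact_mod_cast congrArg (Nat.cast (R := ℝ)) hfibcard
    have htot : (((Finset.univ.filter fun e : Fin N → Bool =>
        η ≤ ‖(N : ℝ)⁻¹ • ∑ n : Fin N, G (n, e n) -
          (2 * N : ℝ)⁻¹ • ∑ ω : Fin N × Bool, G ω‖).card : ℝ))
        ≤ (N:ℝ) * 2^N / ((N:ℝ)*δ)^2 := by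
      refine le_trans hcard1 (le_trans (Finset.sum_le_sum hcard2) (le_of_eq ?_))
      rw [← Finset.sum_div, ← Finset.sum_mul, hsumcard]
    have hNbig : ((δ^2 * ε)⁻¹ : ℝ) ≤ (N:ℝ) := by
      have h1 : ((δ^2*ε)⁻¹ : ℝ) ≤ (⌈(δ^2*ε)⁻¹⌉₊ : ℝ) := Nat.le_ceil _
      have h2 : (⌈(δ^2*ε)⁻¹⌉₊ : ℕ) ≤ N := le_trans (Nat.le_succ _) hN
      exact le_trans h1 (by exact_mod_cast h2)
    rw [div_le_iff₀ (by positivity)]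
    have hsimp : (N:ℝ) * 2^N / ((N:ℝ)*δ)^2 = 2^N / ((N:ℝ) * δ^2) := by
      rw [show ((N:ℝ)*δ)^2 = (N:ℝ) * ((N:ℝ)*δ^2) by ring]
      rw [mul_div_mul_left _ _ hNne]
    have hfin : (2:ℝ)^N / ((N:ℝ) * δ^2) ≤ ε * 2^N := by
      rw [div_le_iff₀ (mul_pos hNpos (pow_pos hδpos 2))]
      have h1 : (1:ℝ) ≤ ε * ((N:ℝ) * δ^2) := by
        have h2 := mul_le_mul_of_nonneg_left hNbig
          (le_of_lt (mul_pos (pow_pos hδpos 2) hε))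
        rw [mul_inv_cancel₀ (ne_of_gt (mul_pos (pow_pos hδpos 2) hε))] at h2
        nlinarith [h2]
      calc (2:ℝ)^N = 2^N * 1 := (mul_one _).symm
        _ ≤ 2^N * (ε * ((N:ℝ) * δ^2)) := mul_le_mul_of_nonneg_left h1 (by positivity)
        _ = ε * 2^N * ((N:ℝ) * δ^2) := by ring
    calc (((Finset.univ.filter fun e : Fin N → Bool =>
        η ≤ ‖(N : ℝ)⁻¹ • ∑ n : Fin N, G (n, e n) -
          (2 * N : ℝ)⁻¹ • ∑ ω : Fin N × Bool, G ω‖).card : ℝ))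
        ≤ (N:ℝ) * 2^N / ((N:ℝ)*δ)^2 := htot
      _ = 2^N / ((N:ℝ)*δ^2) := hsimp
      _ ≤ ε * 2^N := hfin


end
end
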